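/- arXiv:1610.04840 — 6 statements merged into one kernel-verified Lean document; each statement's English description precedes it below -/
import Mathlib

section
/- For every real number ν > -1 and every z > 0, the ratio u = I_{ν+1}(z)/I_ν(z) of modified Bessel functions of the first kind satisfies u² + (2ν/z)·u − 1 < 0. -/
open Real Filter Set

/-- Modified Bessel function of the first kind of order `ν`, defined by its power series
(valid for `z > 0`). -/
noncomputable def besselI (ν : ℝ) (z : ℝ) : ℝ :=
  ∑' m : ℕ, (z / 2) ^ (2 * (m : ℝ) + ν) / ((m.factorial : ℝ) * Real.Gamma ((m : ℝ) + ν + 1))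

/-- Bessel function of the first kind of order `ν`, defined by its power series
(valid for `z > 0`). -/
noncomputable def besselJ (ν : ℝ) (z : ℝ) : ℝ :=
  ∑' m : ℕ, (-1 : ℝ) ^ m * (z / 2) ^ (2 * (m : ℝ) + ν) /
    ((m.factorial : ℝ) * Real.Gamma ((m : ℝ) + ν + 1))

noncomputable def bterm (μ z : ℝ) (m : ℕ) : ℝ :=
  (z / 2) ^ (2 * (m : ℝ) + μ) / ((m.factorial : ℝ) * Real.Gamma ((m : ℝ) + μ + 1))

lemma besselI_eq_tsum (μ z : ℝ) : besselI μ z = ∑' m, bterm μ z m := rfl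

lemma bterm_pos {μ z : ℝ} (hμ : -1 < μ) (hz : 0 < z) (m : ℕ) : 0 < bterm μ z m := by
  have h1 : (0:ℝ) < (m:ℝ) + μ + 1 := by
    have : (0:ℝ) ≤ (m:ℝ) := Nat.cast_nonneg m
    linarith
  have h2 : (0:ℝ) < Real.Gamma ((m:ℝ) + μ + 1) := Real.Gamma_pos_of_pos h1
  have h3 : (0:ℝ) < (m.factorial : ℝ) := by positivity
  have h4 : (0:ℝ) < (z/2) ^ (2 * (m : ℝ) + μ) := Real.rpow_pos_of_pos (by linarith) _
  exact div_pos h4 (mul_pos h3 h2)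

lemma bterm_succ {μ z : ℝ} (hz : 0 < z) (m : ℕ) (hm : (0:ℝ) < (m:ℝ) + μ + 1) :
    bterm μ z (m+1) * (((m:ℝ)+1) * ((m:ℝ) + μ + 1)) = bterm μ z m * (z/2) ^ (2:ℝ) := by
  have hp : (0:ℝ) < z/2 := by linarith
  have h1 : (z/2) ^ (2 * ((m:ℝ)+1) + μ) = (z/2) ^ (2*(m:ℝ)+μ) * (z/2) ^ (2:ℝ) := by
    rw [← Real.rpow_add hp]; ring_nf
  have h2 : Real.Gamma ((m:ℝ) + 1 + μ + 1) = ((m:ℝ)+μ+1) * Real.Gamma ((m:ℝ)+μ+1) := by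
    rw [show (m:ℝ) + 1 + μ + 1 = ((m:ℝ)+μ+1) + 1 by ring, Real.Gamma_add_one hm.ne']
  have hG : (0:ℝ) < Real.Gamma ((m:ℝ)+μ+1) := Real.Gamma_pos_of_pos hm
  have hf : (0:ℝ) < (m.factorial : ℝ) := by positivity
  simp only [bterm]
  push_cast [Nat.factorial_succ]
  rw [h1, h2]
  field_simp

lemma summable_bterm {μ z : ℝ} (hμ : -2 < μ) (hz : 0 < z) : Summable (bterm μ z) := by
  have hp : (0:ℝ) < z/2 := by linarith
  set P : ℝ := (z/2) ^ (2:ℝ) with hPdef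
  have hP : 0 < P := Real.rpow_pos_of_pos hp _
  obtain ⟨N, hN⟩ := exists_nat_gt (max (-μ) (2*P))
  apply summable_of_ratio_norm_eventually_le (r := 1/2) (by norm_num)
  filter_upwards [eventually_ge_atTop N] with m hm
  have hmN : (N:ℝ) ≤ (m:ℝ) := Nat.cast_le.mpr hm
  have hmμ : (0:ℝ) < (m:ℝ) + μ := by
    have := (le_max_left (-μ) (2*P)).trans_lt hN
    linarith
  have hm1 : (0:ℝ) < (m:ℝ) + μ + 1 := by linarith
  have h2P : 2*P < (m:ℝ) + 1 := by
    have := (le_max_right (-μ) (2*P)).trans_lt hN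
    linarith
  have hD : (0:ℝ) < ((m:ℝ)+1) * ((m:ℝ)+μ+1) := by positivity
  have e : bterm μ z (m+1) = bterm μ z m * (P / (((m:ℝ)+1) * ((m:ℝ)+μ+1))) := by
    have h := bterm_succ hz m hm1
    rw [← hPdef] at h
    field_simp
    linarith [h]
  rw [e, norm_mul]
  have hq : ‖P / (((m:ℝ)+1) * ((m:ℝ)+μ+1))‖ ≤ 1/2 := by
    rw [Real.norm_of_nonneg (by positivity)]
    rw [div_le_iff₀ hD]
    nlinarith
  calc ‖bterm μ z m‖ * ‖P / (((m:ℝ)+1) * ((m:ℝ)+μ+1))‖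
      ≤ ‖bterm μ z m‖ * (1/2) := by gcongr
    _ = 1/2 * ‖bterm μ z m‖ := by ring

lemma summable_norm_bterm {μ z : ℝ} (hμ : -2 < μ) (hz : 0 < z) :
    Summable (fun m => ‖bterm μ z m‖) :=
  summable_norm_iff.mpr (summable_bterm hμ hz)

lemma besselI_pos {μ z : ℝ} (hμ : -1 < μ) (hz : 0 < z) : 0 < besselI μ z := by
  rw [besselI_eq_tsum]
  exact Summable.tsum_pos (summable_bterm (by linarith) hz) (fun m => (bterm_pos hμ hz m).le) 0
    (bterm_pos hμ hz 0)

lemma bterm_down {ν z : ℝ} (hν : -1 < ν) (hz : 0 < z) (k : ℕ) :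
    bterm (ν-1) z k * (z/2) = bterm ν z k * ((k:ℝ) + ν) := by
  have hp : (0:ℝ) < z/2 := by linarith
  have hk0 : (0:ℝ) ≤ (k:ℝ) := Nat.cast_nonneg k
  have hpow : (z/2) ^ (2*(k:ℝ)+(ν-1)) * (z/2) = (z/2) ^ (2*(k:ℝ)+ν) := by
    rw [← Real.rpow_add_one hp.ne']; ring_nf
  have harg : (k:ℝ) + (ν-1) + 1 = (k:ℝ) + ν := by ring
  simp only [bterm, harg]
  rcases eq_or_ne ((k:ℝ)+ν) 0 with h0 | h0
  · rw [h0, Real.Gamma_zero]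
    simp [h0]
  · have hΓ : Real.Gamma ((k:ℝ)+ν+1) = ((k:ℝ)+ν) * Real.Gamma ((k:ℝ)+ν) := by
      rw [show (k:ℝ)+ν+1 = ((k:ℝ)+ν)+1 by ring, Real.Gamma_add_one h0]
    have hΓne : Real.Gamma ((k:ℝ)+ν) ≠ 0 := by
      apply Real.Gamma_ne_zero
      intro n
      rcases n with _ | n
      · simpa using h0
      · intro hc
        push_cast at hc
        linarith
    have hf : (0:ℝ) < (k.factorial : ℝ) := by positivity
    rw [hΓ, ← hpow]
    field_simp

lemma bterm_up {ν z : ℝ} (hν : -1 < ν) (hz : 0 < z) (l : ℕ) :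
    bterm (ν+1) z l * ((l:ℝ) + ν + 1) = bterm ν z l * (z/2) := by
  have hp : (0:ℝ) < z/2 := by linarith
  have hl0 : (0:ℝ) ≤ (l:ℝ) := Nat.cast_nonneg l
  have hl : (0:ℝ) < (l:ℝ) + ν + 1 := by linarith
  have hpow : (z/2) ^ (2*(l:ℝ)+(ν+1)) = (z/2) ^ (2*(l:ℝ)+ν) * (z/2) := by
    rw [← Real.rpow_add_one hp.ne']; ring_nf
  have hΓ : Real.Gamma ((l:ℝ)+(ν+1)+1) = ((l:ℝ)+ν+1) * Real.Gamma ((l:ℝ)+ν+1) := by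
    rw [show (l:ℝ)+(ν+1)+1 = ((l:ℝ)+ν+1)+1 by ring, Real.Gamma_add_one hl.ne']
  have hΓpos : (0:ℝ) < Real.Gamma ((l:ℝ)+ν+1) := Real.Gamma_pos_of_pos (by linarith)
  have hf : (0:ℝ) < (l.factorial : ℝ) := by positivity
  simp only [bterm]
  rw [hpow, hΓ]
  field_simp

lemma bterm_shift {ν z : ℝ} (hν : -1 < ν) (hz : 0 < z) (m : ℕ) :
    bterm (ν+1) z m * (z/2) = bterm ν z (m+1) * ((m:ℝ)+1) := by
  have hp : (0:ℝ) < z/2 := by linarith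
  have hm0 : (0:ℝ) ≤ (m:ℝ) := Nat.cast_nonneg m
  have hpow : (z/2) ^ (2*(m:ℝ)+(ν+1)) * (z/2) = (z/2) ^ (2*((m:ℝ)+1)+ν) := by
    rw [← Real.rpow_add_one hp.ne']; ring_nf
  have hΓpos : (0:ℝ) < Real.Gamma ((m:ℝ)+(ν+1)+1) := Real.Gamma_pos_of_pos (by linarith)
  have hf : (0:ℝ) < (m.factorial : ℝ) := by positivity
  simp only [bterm]
  push_cast [Nat.factorial_succ]
  rw [show (m:ℝ)+1+ν+1 = (m:ℝ)+(ν+1)+1 by ring, ← hpow]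
  field_simp

lemma bterm_prod {ν z : ℝ} (hν : -1 < ν) (hz : 0 < z) (k l : ℕ) :
    bterm (ν-1) z k * bterm (ν+1) z l
      = bterm ν z k * bterm ν z l * (((k:ℝ)+ν)/((l:ℝ)+ν+1)) := by
  have hp : (0:ℝ) < z/2 := by linarith
  have hl : (0:ℝ) < (l:ℝ) + ν + 1 := by
    have : (0:ℝ) ≤ (l:ℝ) := Nat.cast_nonneg l
    linarith
  have h3 : (bterm (ν-1) z k * (z/2)) * (bterm (ν+1) z l * ((l:ℝ)+ν+1))
      = (bterm ν z k * ((k:ℝ)+ν)) * (bterm ν z l * (z/2)) := by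
    rw [bterm_down hν hz k, bterm_up hν hz l]
  rw [mul_div_assoc', eq_div_iff hl.ne']
  apply mul_right_cancel₀ hp.ne'
  linear_combination h3

lemma pair_aux (x N ν P b1 b2 b3 b4 : ℝ) (hb1 : 0 < b1) (hb2 : 0 < b2) (hb3 : 0 < b3)
    (hb4 : 0 < b4) (hP : 0 < P) (hx0 : 0 ≤ x) (hxN : x + 1 ≤ N) (hν : -1 < ν)
    (hr1 : b1 * ((x+1)*(x+ν+1)) = b3 * P)
    (hr2 : b4 * ((N-x)*(N-x+ν)) = b2 * P) :
    0 ≤ b1 * b2 * ((N - 2*(x+1) + 1)/(N - (x+1) + ν + 1))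
      + b4 * b3 * ((N - 2*(N-x) + 1)/(N - (N-x) + ν + 1)) := by
  have hNx : (0:ℝ) < N - x := by linarith
  have hNxν : (0:ℝ) < N - x + ν := by linarith
  have hd1 : (0:ℝ) < N - (x+1) + ν + 1 := by linarith
  have hd2 : (0:ℝ) < N - (N-x) + ν + 1 := by linarith
  have hcancel : b4*b3*((N-x)*(N-x+ν)) = b1*b2*((x+1)*(x+ν+1)) :=
    mul_right_cancel₀ hP.ne' (by linear_combination P * b3 * hr2 - P * b2 * hr1)
  rw [mul_div_assoc', mul_div_assoc', div_add_div _ _ hd1.ne' hd2.ne']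
  apply div_nonneg _ (mul_pos hd1 hd2).le
  have hnum : (b1*b2*(N - 2*(x+1) + 1) * (N - (N-x) + ν + 1)
      + (N - (x+1) + ν + 1) * (b4*b3*(N - 2*(N-x) + 1))) * (N - x)
      = b1*b2*(x+ν+1)*(N-2*x-1)^2 := by
    linear_combination (N - 2*(N-x) + 1) * hcancel
  nlinarith [hnum, hNx, mul_nonneg (mul_nonneg (mul_nonneg hb1.le hb2.le)
    (by linarith : (0:ℝ) ≤ x+ν+1)) (sq_nonneg (N-2*x-1))]

lemma coeff_pos {ν z : ℝ} (hν : -1 < ν) (hz : 0 < z) (n : ℕ) :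
    0 < ∑ k ∈ Finset.range (n+1),
      (bterm ν z k * bterm ν z (n-k) - bterm (ν-1) z k * bterm (ν+1) z (n-k)) := by
  have hBpos : ∀ m, 0 < bterm ν z m := fun m => bterm_pos hν hz m
  have hP : 0 < (z/2) ^ (2:ℝ) := Real.rpow_pos_of_pos (by linarith) _
  set T : ℕ → ℝ := fun k =>
    bterm ν z k * bterm ν z (n - k) * (((n:ℝ) - 2*(k:ℝ) + 1)/((n:ℝ) - (k:ℝ) + ν + 1)) with hT
  have hstep : ∀ k ∈ Finset.range (n+1),
      bterm ν z k * bterm ν z (n-k) - bterm (ν-1) z k * bterm (ν+1) z (n-k) = T k := by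
    intro k hk
    have hkn : k ≤ n := by simpa [Nat.lt_succ_iff] using hk
    have hcast : ((n-k:ℕ):ℝ) = (n:ℝ) - (k:ℝ) := by
      push_cast [Nat.cast_sub hkn]; ring
    have hden : (0:ℝ) < (n:ℝ) - (k:ℝ) + ν + 1 := by
      have : (k:ℝ) ≤ (n:ℝ) := Nat.cast_le.mpr hkn
      linarith
    have hb1 := hBpos k
    have hb2 := hBpos (n-k)
    rw [bterm_prod hν hz k (n-k), hcast]
    simp only [hT]
    field_simp
    ring
  rw [Finset.sum_congr rfl hstep]
  have hT0 : 0 < T 0 := by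
    simp only [hT]
    have hn0 : (0:ℝ) ≤ (n:ℝ) := Nat.cast_nonneg n
    have h1 : (0:ℝ) < (n:ℝ) - 2*((0:ℕ):ℝ) + 1 := by push_cast; linarith
    have h2 : (0:ℝ) < (n:ℝ) - ((0:ℕ):ℝ) + ν + 1 := by push_cast; linarith
    exact mul_pos (mul_pos (hBpos 0) (hBpos (n-0))) (div_pos h1 h2)
  have hpair : ∀ i ∈ Finset.range n, 0 ≤ T (i+1) + T (n-i) := by
    intro i hi
    have hin : i < n := Finset.mem_range.mp hi
    have hx1 : ((n-i:ℕ):ℝ) = (n:ℝ) - (i:ℝ) := by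
      push_cast [Nat.cast_sub hin.le]; ring
    have hx2 : ((n-(i+1):ℕ):ℝ) = (n:ℝ) - (i:ℝ) - 1 := by
      push_cast [Nat.cast_sub hin]; ring
    have hx3 : n - (n - i) = i := by omega
    have hx4 : (n - (i+1)) + 1 = n - i := by omega
    have hxN : (i:ℝ) + 1 ≤ (n:ℝ) := by exact_mod_cast hin
    have hr1 : bterm ν z (i+1) * (((i:ℝ)+1)*((i:ℝ)+ν+1)) = bterm ν z i * (z/2)^(2:ℝ) := by
      have h0 : (0:ℝ) < (i:ℝ) + ν + 1 := by
        have : (0:ℝ) ≤ (i:ℝ) := Nat.cast_nonneg i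
        linarith
      exact bterm_succ hz i h0
    have hr2 : bterm ν z (n-i) * (((n:ℝ)-(i:ℝ))*((n:ℝ)-(i:ℝ)+ν)) =
        bterm ν z (n-(i+1)) * (z/2)^(2:ℝ) := by
      have h0 : (0:ℝ) < ((n-(i+1):ℕ):ℝ) + ν + 1 := by rw [hx2]; linarith
      have h := bterm_succ hz (n-(i+1)) h0
      rw [hx4, hx2] at h
      linear_combination h
    simp only [hT]
    rw [hx3]
    push_cast [hx1, hx2, hx4]
    exact pair_aux (i:ℝ) (n:ℝ) ν ((z/2)^(2:ℝ)) _ _ _ _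
      (hBpos (i+1)) (hBpos (n-(i+1))) (hBpos i) (hBpos (n-i)) hP
      (Nat.cast_nonneg i) hxN hν hr1 hr2
  have hrefl : ∑ i ∈ Finset.range n, T (i+1) = ∑ i ∈ Finset.range n, T (n-i) := by
    rw [← Finset.sum_range_reflect (fun i => T (i+1)) n]
    apply Finset.sum_congr rfl
    intro i hi
    have hin : i < n := Finset.mem_range.mp hi
    congr 1
    omega
  have hsum_nonneg : 0 ≤ ∑ i ∈ Finset.range n, T (i+1) := by
    have h2 : 2 * ∑ i ∈ Finset.range n, T (i+1)
        = ∑ i ∈ Finset.range n, (T (i+1) + T (n-i)) := by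
      rw [Finset.sum_add_distrib, ← hrefl]; ring
    have h3 : 0 ≤ ∑ i ∈ Finset.range n, (T (i+1) + T (n-i)) :=
      Finset.sum_nonneg hpair
    linarith
  rw [Finset.sum_range_succ' T n]
  linarith

lemma turan {ν z : ℝ} (hν : -1 < ν) (hz : 0 < z) :
    besselI (ν-1) z * besselI (ν+1) z < besselI ν z * besselI ν z := by
  have hnν : Summable (fun m => ‖bterm ν z m‖) := summable_norm_bterm (by linarith) hz
  have hnd : Summable (fun m => ‖bterm (ν-1) z m‖) := summable_norm_bterm (by linarith) hz
  have hnu : Summable (fun m => ‖bterm (ν+1) z m‖) := summable_norm_bterm (by linarith) hz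
  rw [besselI_eq_tsum, besselI_eq_tsum, besselI_eq_tsum,
    tsum_mul_tsum_eq_tsum_sum_range_of_summable_norm hnν hnν,
    tsum_mul_tsum_eq_tsum_sum_range_of_summable_norm hnd hnu]
  apply Summable.tsum_lt_tsum (i := 0)
  · intro n
    have h := coeff_pos hν hz n
    rw [Finset.sum_sub_distrib] at h
    linarith
  · have h := coeff_pos hν hz 0
    rw [Finset.sum_sub_distrib] at h
    linarith
  · exact (summable_norm_sum_mul_range_of_summable_norm hnd hnu).of_norm
  · exact (summable_norm_sum_mul_range_of_summable_norm hnν hnν).of_norm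

lemma recur {ν z : ℝ} (hν : -1 < ν) (hz : 0 < z) :
    besselI (ν-1) z = besselI (ν+1) z + (2*ν/z) * besselI ν z := by
  have hp : (0:ℝ) < z/2 := by linarith
  have hterm : ∀ m : ℕ, bterm (ν-1) z (m+1)
      = bterm (ν+1) z m + (2*ν/z) * bterm ν z (m+1) := by
    intro m
    have h1 := bterm_down hν hz (m+1)
    have h2 := bterm_shift hν hz m
    apply mul_right_cancel₀ hp.ne'
    push_cast at h1
    rw [add_mul, h2, h1]
    field_simp
  have h0 : bterm (ν-1) z 0 = (2*ν/z) * bterm ν z 0 := by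
    have h1 := bterm_down hν hz 0
    apply mul_right_cancel₀ hp.ne'
    rw [h1]
    push_cast
    field_simp
    ring
  have hsd : Summable (bterm (ν-1) z) := summable_bterm (by linarith) hz
  have hsν : Summable (bterm ν z) := summable_bterm (by linarith) hz
  have hsu : Summable (bterm (ν+1) z) := summable_bterm (by linarith) hz
  have hsν' : Summable (fun m => bterm ν z (m+1)) := (summable_nat_add_iff 1).mpr hsν
  rw [besselI_eq_tsum, besselI_eq_tsum, besselI_eq_tsum]
  rw [Summable.tsum_eq_zero_add hsd, h0]
  have : ∑' m, bterm (ν-1) z (m+1)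
      = ∑' m, (bterm (ν+1) z m + (2*ν/z) * bterm ν z (m+1)) := by
    exact tsum_congr hterm
  rw [this, Summable.tsum_add hsu (hsν'.mul_left _), tsum_mul_left]
  rw [Summable.tsum_eq_zero_add hsν]
  ring

/-- For every `ν > -1` and `z > 0`, the ratio `u = I_{ν+1}(z)/I_ν(z)` satisfies
`u² + (2ν/z)·u − 1 < 0`. -/
theorem stmt0 (ν z : ℝ) (hν : -1 < ν) (hz : 0 < z) :
    (besselI (ν + 1) z / besselI ν z) ^ 2
      + (2 * ν / z) * (besselI (ν + 1) z / besselI ν z) - 1 < 0 := by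
  have hIν : 0 < besselI ν z := besselI_pos hν hz
  have hIu : 0 < besselI (ν+1) z := besselI_pos (by linarith) hz
  have ht := turan hν hz
  have hr := recur hν hz
  rw [hr] at ht
  have hrw : (besselI (ν + 1) z / besselI ν z) ^ 2
      + (2 * ν / z) * (besselI (ν + 1) z / besselI ν z) - 1
      = ((besselI (ν+1) z + (2*ν/z) * besselI ν z) * besselI (ν+1) z
          - besselI ν z * besselI ν z) / (besselI ν z)^2 := by
    field_simp
  rw [hrw]
  apply div_neg_of_neg_of_pos _ (by positivity)
  linarith
end

section
/- For every real number ν > -1 and every z > 0, I_{ν+1}(z)/I_ν(z) < (−ν + √(ν² + z²))/z. -/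
open Real Filter Set

private def asc (x : ℝ) : ℕ → ℝ
  | 0 => 1
  | n+1 => asc x n * (x + n)

private lemma asc_zero (x : ℝ) : asc x 0 = 1 := rfl

private lemma asc_succ (x : ℝ) (n : ℕ) : asc x (n+1) = asc x n * (x + n) := rfl

private lemma asc_succ' (x : ℝ) (n : ℕ) : asc x (n+1) = x * asc (x+1) n := by
  induction n generalizing x with
  | zero => simp [asc_succ, asc_zero]
  | succ n ih =>
    rw [asc_succ, ih, asc_succ]
    push_cast
    ring

private lemma asc_pos {x : ℝ} (hx : 0 < x) (n : ℕ) : 0 < asc x n := by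
  induction n with
  | zero => norm_num [asc_zero]
  | succ n ih => exact mul_pos ih (by positivity)

private lemma Gamma_asc {x : ℝ} (hx : 0 < x) (n : ℕ) :
    Real.Gamma (x + n) = Real.Gamma x * asc x n := by
  induction n with
  | zero => simp [asc_zero]
  | succ n ih =>
    have h : x + (n+1 : ℕ) = (x + n) + 1 := by push_cast; ring
    rw [h, Real.Gamma_add_one (by positivity), ih, asc_succ]
    ring

private lemma vandermonde (s : ℕ) :
    ∀ α β : ℝ,
    ∑ k ∈ Finset.range (s+1),
        (s.choose k : ℝ) * asc (α + k) (s - k) * asc (β + (s - k : ℕ)) k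
      = asc (α + β + s - 1) s := by
  induction s with
  | zero => intro α β; simp [asc_zero]
  | succ s ih =>
    intro α β
    set G : ℕ → ℝ := fun k => asc (α + k) (s + 1 - k) * asc (β + (s + 1 - k : ℕ)) k with hG
    have hsplit : ∑ k ∈ Finset.range (s+2),
        ((s+1).choose k : ℝ) * asc (α + k) (s + 1 - k) * asc (β + (s + 1 - k : ℕ)) k
        = ∑ k ∈ Finset.range (s+1), (s.choose k : ℝ) * (G (k+1) + G k) := by
      have h1 : ∀ k, ((s+1).choose k : ℝ) * asc (α + k) (s + 1 - k) * asc (β + (s + 1 - k : ℕ)) k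
          = ((s+1).choose k : ℝ) * G k := fun k => by rw [hG]; ring
      simp only [h1]
      rw [Finset.sum_range_succ' (fun k => ((s+1).choose k : ℝ) * G k)]
      have h2 : ∀ k, (((s+1).choose (k+1) : ℕ) : ℝ) = (s.choose k : ℝ) + (s.choose (k+1) : ℝ) := by
        intro k; rw [Nat.choose_succ_succ]; push_cast; ring
      simp only [h2]
      have h3 : ∑ k ∈ Finset.range (s+1), ((s.choose k : ℝ) + (s.choose (k+1) : ℝ)) * G (k+1)
          = ∑ k ∈ Finset.range (s+1), (s.choose k : ℝ) * G (k+1)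
            + ∑ k ∈ Finset.range (s+1), (s.choose (k+1) : ℝ) * G (k+1) := by
        rw [← Finset.sum_add_distrib]; exact Finset.sum_congr rfl (fun k _ => by ring)
      rw [h3]
      have h4 : ∑ k ∈ Finset.range (s+1), (s.choose (k+1) : ℝ) * G (k+1)
          = ∑ k ∈ Finset.range (s+2), (s.choose k : ℝ) * G k - (s.choose 0 : ℝ) * G 0 := by
        rw [Finset.sum_range_succ' (fun k => (s.choose k : ℝ) * G k)]; ring
      have h5 : ∑ k ∈ Finset.range (s+2), (s.choose k : ℝ) * G k
          = ∑ k ∈ Finset.range (s+1), (s.choose k : ℝ) * G k := by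
        rw [Finset.sum_range_succ, Nat.choose_succ_self]; norm_num
      rw [h4, h5]
      simp only [Nat.choose_zero_right, Nat.cast_one, Nat.choose_self]
      have hfin : ∑ k ∈ Finset.range (s+1), (s.choose k : ℝ) * G (k+1)
          + ∑ k ∈ Finset.range (s+1), (s.choose k : ℝ) * G k
          = ∑ k ∈ Finset.range (s+1), (s.choose k : ℝ) * (G (k+1) + G k) := by
        rw [← Finset.sum_add_distrib]
        exact Finset.sum_congr rfl (fun k _ => by ring)
      linarith [hfin]
    rw [hsplit]
    have hpt : ∀ k ∈ Finset.range (s+1), (s.choose k : ℝ) * (G (k+1) + G k)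
        = (α + β + s) * ((s.choose k : ℝ) * asc ((α+1) + k) (s - k) * asc ((β+1) + (s - k : ℕ)) k) := by
      intro k hk
      have hk' : k ≤ s := Nat.lt_succ_iff.mp (Finset.mem_range.mp hk)
      have hsub : s + 1 - k = (s - k) + 1 := by omega
      have hsub2 : s + 1 - (k+1) = s - k := by omega
      have hcast : ((s - k : ℕ) : ℝ) = (s : ℝ) - k := by
        rw [Nat.cast_sub hk']
      have e1 : asc (α + k) (s + 1 - k) = asc (α + k) (s - k) * (α + s) := by
        rw [hsub, asc_succ]
        rw [hcast]; ring_nf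
      have e2 : asc (β + ((s + 1 - k : ℕ) : ℝ)) k = asc ((β+1) + (s - k : ℕ)) k := by
        congr 1
        rw [hsub]; push_cast; ring
      have e3 : asc (β + ((s - k : ℕ) : ℝ)) (k+1)
          = (β + ((s-k : ℕ) : ℝ)) * asc ((β+1) + (s - k : ℕ)) k := by
        rw [asc_succ']; congr 2; ring
      have e4 : (α + (k:ℝ)) * asc ((α+1) + k) (s - k) = asc (α + k) (s - k) * (α + s) := by
        have := asc_succ' (α + k) (s - k)
        have h2 := asc_succ (α + k) (s - k)
        rw [hcast] at h2
        have harg : (α + (k:ℝ) + 1) = (α + 1) + k := by ring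
        rw [harg] at this
        rw [← this, h2]; ring
      have hGk : G k = asc (α + k) (s - k) * (α + s) * asc ((β+1) + (s - k : ℕ)) k := by
        rw [hG]; simp only
        rw [e1, e2]
      have hGk1 : G (k+1) = asc (α + (k+1 : ℕ)) (s - k) * ((β + ((s-k:ℕ):ℝ)) * asc ((β+1) + (s - k : ℕ)) k) := by
        rw [hG]; simp only
        rw [hsub2, e3]
      rw [hGk, hGk1]
      have harg2 : (α + ((k+1 : ℕ) : ℝ)) = (α + 1) + k := by push_cast; ring
      rw [harg2]
      have hβ : (β + ((s-k:ℕ):ℝ)) = (α + β + s) - (α + k) := by rw [hcast]; ring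
      rw [hβ]
      have expand : asc ((α+1) + k) (s-k) * (((α + β + s) - (α + (k:ℝ))) * asc ((β+1) + (s - k : ℕ)) k)
          = (α + β + s) * (asc ((α+1)+k) (s-k) * asc ((β+1) + (s-k : ℕ)) k)
            - ((α + (k:ℝ)) * asc ((α+1)+k) (s-k)) * asc ((β+1) + (s-k:ℕ)) k := by ring
      rw [expand, e4]
      ring
    rw [Finset.sum_congr rfl hpt, ← Finset.mul_sum, ih (α+1) (β+1)]
    have : (α + 1 + (β + 1) + (s:ℝ) - 1) = (α + β + s) + 1 := by ring
    rw [this]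
    have goalr : asc (α + β + ((s+1 : ℕ):ℝ) - 1) (s+1) = (α+β+s) * asc ((α+β+s)+1) s := by
      have : (α + β + ((s+1 : ℕ):ℝ) - 1) = α + β + s := by push_cast; ring
      rw [this, asc_succ']
    rw [goalr]

private lemma asc_pos' {x : ℝ} (hx : 0 < x) (n : ℕ) : 0 < asc x n := by
  induction n with
  | zero => norm_num [asc_zero]
  | succ n ih => exact mul_pos ih (by positivity)

private lemma sumV {α β : ℝ} (hα : 0 < α) (hβ : 0 < β) (n : ℕ) :
    ∑ k ∈ Finset.range (n+1),
        1 / ((k.factorial : ℝ) * ((n-k).factorial : ℝ) * Real.Gamma (α + k) * Real.Gamma (β + (n-k : ℕ)))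
      = asc (α + β + n - 1) n / ((n.factorial : ℝ) * Real.Gamma (α + n) * Real.Gamma (β + n)) := by
  have key : ∀ k ∈ Finset.range (n+1),
      1 / ((k.factorial : ℝ) * ((n-k).factorial : ℝ) * Real.Gamma (α + k) * Real.Gamma (β + (n-k : ℕ)))
      = ((n.choose k : ℝ) * asc (α + k) (n - k) * asc (β + (n-k : ℕ)) k)
          / ((n.factorial : ℝ) * Real.Gamma (α + n) * Real.Gamma (β + n)) := by
    intro k hk
    have hk' : k ≤ n := Nat.lt_succ_iff.mp (Finset.mem_range.mp hk)
    have hG1 : Real.Gamma (α + n) = Real.Gamma (α + k) * asc (α + k) (n - k) := by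
      have h := Gamma_asc (x := α + k) (by positivity) (n - k)
      have harg : (α + k) + ((n-k : ℕ) : ℝ) = α + n := by
        rw [Nat.cast_sub hk']; ring
      rw [harg] at h
      exact h
    have hG2 : Real.Gamma (β + n) = Real.Gamma (β + (n-k : ℕ)) * asc (β + (n-k : ℕ)) k := by
      have h := Gamma_asc (x := β + (n-k : ℕ)) (by positivity) k
      have harg : (β + ((n-k : ℕ) : ℝ)) + (k : ℝ) = β + n := by
        rw [Nat.cast_sub hk']; ring
      rw [harg] at h
      exact h
    have hchoose : (n.factorial : ℝ) = (n.choose k : ℝ) * (k.factorial : ℝ) * ((n-k).factorial : ℝ) := by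
      rw [← Nat.choose_mul_factorial_mul_factorial hk']
      push_cast; ring
    have hΓ1 : (0:ℝ) < Real.Gamma (α + k) := Real.Gamma_pos_of_pos (by positivity)
    have hΓ2 : (0:ℝ) < Real.Gamma (β + (n-k : ℕ)) := Real.Gamma_pos_of_pos (by positivity)
    have hf1 : (0:ℝ) < (k.factorial : ℝ) := by positivity
    have hf2 : (0:ℝ) < ((n-k).factorial : ℝ) := by positivity
    have hA1 : 0 < asc (α + k) (n - k) := asc_pos (by positivity) _
    have hA2 : 0 < asc (β + (n-k : ℕ)) k := asc_pos (by positivity) _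
    have hc : (0:ℝ) < (n.choose k : ℝ) := by
      exact_mod_cast Nat.cast_pos.mpr (Nat.choose_pos hk')
    rw [hG1, hG2, hchoose, div_eq_div_iff
      (ne_of_gt (mul_pos (mul_pos (mul_pos hf1 hf2) hΓ1) hΓ2))
      (ne_of_gt (mul_pos (mul_pos (mul_pos (mul_pos hc hf1) hf2) (mul_pos hΓ1 hA1)) (mul_pos hΓ2 hA2)))]
    ring
  rw [Finset.sum_congr rfl key, ← Finset.sum_div, vandermonde n α β]

private lemma coeff_eval {μ1 μ2 : ℝ} (t : ℝ) (h1 : 0 < μ1) (h2 : 0 < μ2) (s : ℕ) :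
    ∑ k ∈ Finset.range (s+1),
        (t ^ k / ((k.factorial : ℝ) * Real.Gamma (μ1 + k)))
          * (t ^ (s-k) / (((s-k).factorial : ℝ) * Real.Gamma (μ2 + (s-k : ℕ))))
      = t ^ s * (asc (μ1 + μ2 + s - 1) s
          / ((s.factorial : ℝ) * Real.Gamma (μ1 + s) * Real.Gamma (μ2 + s))) := by
  rw [← sumV h1 h2 s, Finset.mul_sum]
  apply Finset.sum_congr rfl
  intro k hk
  have hk' : k ≤ s := Nat.lt_succ_iff.mp (Finset.mem_range.mp hk)
  have hpow : t ^ k * t ^ (s-k) = t ^ s := by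
    rw [← pow_add]; congr 1; omega
  rw [div_mul_div_comm, hpow, mul_one_div]
  congr 1
  ring

private lemma summable_aux {ν t : ℝ} (hν : -1 < ν) (ht : 0 < t) :
    Summable (fun m : ℕ => t ^ m / ((m.factorial : ℝ) * Real.Gamma ((ν+1) + m))) := by
  set f : ℕ → ℝ := fun m => t ^ m / ((m.factorial : ℝ) * Real.Gamma ((ν+1) + m)) with hf
  have hpos : ∀ m, 0 < f m := by
    intro m
    have hm : (0:ℝ) ≤ m := Nat.cast_nonneg m
    have : 0 < Real.Gamma ((ν+1) + m) := Real.Gamma_pos_of_pos (by linarith)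
    rw [hf]; positivity
  have hratio : ∀ m : ℕ, ‖f (m+1)‖ / ‖f m‖ = t / (((m:ℝ)+1) * ((ν+1) + m)) := by
    intro m
    rw [Real.norm_eq_abs, Real.norm_eq_abs, abs_of_pos (hpos _), abs_of_pos (hpos _), hf]
    simp only
    have hΓ : Real.Gamma ((ν+1) + ((m+1 : ℕ) : ℝ)) = ((ν+1) + m) * Real.Gamma ((ν+1) + m) := by
      have harg : ((ν+1) + ((m+1 : ℕ) : ℝ)) = ((ν+1) + m) + 1 := by push_cast; ring
      have hm : (0:ℝ) ≤ m := Nat.cast_nonneg m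
      rw [harg, Real.Gamma_add_one (by linarith)]
    have hfac : (((m+1).factorial : ℕ) : ℝ) = ((m:ℝ)+1) * (m.factorial : ℝ) := by
      rw [Nat.factorial_succ]; push_cast; ring
    rw [hΓ, hfac, pow_succ]
    have hm : (0:ℝ) ≤ m := Nat.cast_nonneg m
    have h1 : (0:ℝ) < Real.Gamma ((ν+1) + m) := Real.Gamma_pos_of_pos (by linarith)
    have h2 : (0:ℝ) < (m.factorial : ℝ) := by positivity
    have h3 : (0:ℝ) < (m:ℝ)+1 := by positivity
    have h4 : (0:ℝ) < (ν+1) + m := by linarith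
    have h5 : (0:ℝ) < t^m := by positivity
    field_simp
  have htend : Tendsto (fun m : ℕ => ‖f (m+1)‖ / ‖f m‖) atTop (nhds 0) := by
    simp only [hratio]
    have hd : Tendsto (fun m : ℕ => ((m:ℝ)+1) * ((ν+1) + m)) atTop atTop := by
      apply Filter.Tendsto.atTop_mul_atTop₀
      · exact tendsto_atTop_add_const_right atTop 1 tendsto_natCast_atTop_atTop
      · exact tendsto_atTop_add_const_left atTop (ν+1) tendsto_natCast_atTop_atTop
    have := hd.inv_tendsto_atTop
    have h2 := this.const_mul t
    simp only [mul_zero] at h2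
    simpa [div_eq_mul_inv] using h2
  exact summable_of_ratio_test_tendsto_lt_one zero_lt_one
    (Filter.Eventually.of_forall (fun m => (hpos m).ne')) htend

set_option maxHeartbeats 2000000 in
/-- For every `ν > -1` and `z > 0`, `I_{ν+1}(z)/I_ν(z) < (−ν + √(ν² + z²))/z`. -/
theorem stmt1 (ν z : ℝ) (hν : -1 < ν) (hz : 0 < z) :
    besselI (ν + 1) z / besselI ν z < (-ν + Real.sqrt (ν ^ 2 + z ^ 2)) / z := by
  set x : ℝ := z / 2 with hxdef
  have hx : 0 < x := by positivity
  set t : ℝ := x ^ 2 with htdef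
  have ht : 0 < t := by positivity
  -- power series representation
  have hbI : ∀ μ : ℝ, besselI μ z
      = x ^ μ * ∑' m : ℕ, t ^ m / ((m.factorial : ℝ) * Real.Gamma ((μ+1) + m)) := by
    intro μ
    rw [besselI, ← tsum_mul_left]
    apply tsum_congr
    intro m
    have harg : Real.Gamma ((m:ℝ) + μ + 1) = Real.Gamma ((μ+1) + m) := by
      congr 1; ring
    have hexp : (z/2) ^ (2 * (m:ℝ) + μ) = t ^ m * x ^ μ := by
      rw [← hxdef, show (2 * (m:ℝ) + μ) = ((2*m : ℕ) : ℝ) + μ by push_cast; ring,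
        Real.rpow_add hx, Real.rpow_natCast, pow_mul, ← htdef]
    rw [harg, hexp]
    ring
  set d : ℕ → ℝ := fun m => t ^ m / ((m.factorial : ℝ) * Real.Gamma ((ν+1) + m)) with hddef
  set e : ℕ → ℝ := fun m => t ^ m / ((m.factorial : ℝ) * Real.Gamma ((ν+2) + m)) with hedef
  have hd : Summable d := summable_aux hν ht
  have he : Summable e := by
    have h := summable_aux (ν := ν + 1) (by linarith) ht
    have harg : ∀ m : ℕ, (ν + 1 + 1 : ℝ) + m = (ν+2) + m := fun m => by ring
    simpa only [hedef, harg] using h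
  have hdpos : ∀ m, 0 < d m := by
    intro m
    have hm : (0:ℝ) ≤ m := Nat.cast_nonneg m
    have : 0 < Real.Gamma ((ν+1) + m) := Real.Gamma_pos_of_pos (by linarith)
    simp only [hddef]
    positivity
  have hepos : ∀ m, 0 < e m := by
    intro m
    have hm : (0:ℝ) ≤ m := Nat.cast_nonneg m
    have : 0 < Real.Gamma ((ν+2) + m) := Real.Gamma_pos_of_pos (by linarith)
    simp only [hedef]
    positivity
  set A : ℝ := ∑' m, d m with hAdef
  set B : ℝ := ∑' m, e m with hBdef
  have hA : 0 < A := Summable.tsum_pos hd (fun m => (hdpos m).le) 0 (hdpos 0)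
  have hB : 0 < B := Summable.tsum_pos he (fun m => (hepos m).le) 0 (hepos 0)
  have hdn : Summable fun m => ‖d m‖ := by
    have : (fun m => ‖d m‖) = fun m => |d m| := funext fun m => Real.norm_eq_abs _
    rw [this]
    exact summable_abs_iff.mpr hd
  have hen : Summable fun m => ‖e m‖ := by
    have : (fun m => ‖e m‖) = fun m => |e m| := funext fun m => Real.norm_eq_abs _
    rw [this]
    exact summable_abs_iff.mpr he
  set P : ℕ → ℝ := fun s => ∑ k ∈ Finset.range (s+1), d k * d (s-k) with hPdef
  set Q : ℕ → ℝ := fun s => ∑ k ∈ Finset.range (s+1), d k * e (s-k) with hQdef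
  set R : ℕ → ℝ := fun s => ∑ k ∈ Finset.range (s+1), e k * e (s-k) with hRdef
  have hAA : A * A = ∑' s, P s := tsum_mul_tsum_eq_tsum_sum_range_of_summable_norm hdn hdn
  have hAB : A * B = ∑' s, Q s := tsum_mul_tsum_eq_tsum_sum_range_of_summable_norm hdn hen
  have hBB : B * B = ∑' s, R s := tsum_mul_tsum_eq_tsum_sum_range_of_summable_norm hen hen
  have hPsum : Summable P := (summable_norm_sum_mul_range_of_summable_norm hdn hdn).of_norm
  have hQsum : Summable Q := (summable_norm_sum_mul_range_of_summable_norm hdn hen).of_norm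
  have hRsum : Summable R := (summable_norm_sum_mul_range_of_summable_norm hen hen).of_norm
  -- closed forms for the coefficients
  have hP : ∀ s : ℕ, P s = t ^ s * (asc ((ν+1) + (ν+1) + s - 1) s
      / ((s.factorial : ℝ) * Real.Gamma ((ν+1) + s) * Real.Gamma ((ν+1) + s))) :=
    fun s => coeff_eval t (by linarith) (by linarith) s
  have hQ : ∀ s : ℕ, Q s = t ^ s * (asc ((ν+1) + (ν+2) + s - 1) s
      / ((s.factorial : ℝ) * Real.Gamma ((ν+1) + s) * Real.Gamma ((ν+2) + s))) :=
    fun s => coeff_eval t (by linarith) (by linarith) s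
  have hR : ∀ s : ℕ, R s = t ^ s * (asc ((ν+2) + (ν+2) + s - 1) s
      / ((s.factorial : ℝ) * Real.Gamma ((ν+2) + s) * Real.Gamma ((ν+2) + s))) :=
    fun s => coeff_eval t (by linarith) (by linarith) s
  -- the shifted sequence
  set R' : ℕ → ℝ := fun s => if s = 0 then 0 else t * R (s-1) with hR'def
  have hR'0 : R' 0 = 0 := by simp [hR'def]
  have hR'succ : ∀ s : ℕ, R' (s+1) = t * R s := by intro s; simp [hR'def]
  have hR'sum : Summable R' := by
    have h1 : (fun s => R' (s+1)) = fun s => t * R s := funext fun s => hR'succ s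
    have h2 : Summable (fun s => R' (s+1)) := by rw [h1]; exact hRsum.mul_left t
    exact (summable_nat_add_iff 1).mp h2
  have htR : t * (∑' s, R s) = ∑' s, R' s := by
    rw [Summable.tsum_eq_zero_add hR'sum, hR'0, zero_add]
    have h1 : (fun s => R' (s+1)) = fun s => t * R s := funext fun s => hR'succ s
    rw [h1, tsum_mul_left]
  -- positivity of all coefficients
  have hcpos : ∀ s : ℕ, 0 < P s - ν * Q s - R' s := by
    intro s
    cases s with
    | zero =>
      rw [hR'0, sub_zero]
      have hG : 0 < Real.Gamma (ν+1) := Real.Gamma_pos_of_pos (by linarith)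
      have hd0 : d 0 = 1 / Real.Gamma (ν+1) := by
        simp [hddef]
      have he0 : e 0 = 1 / ((ν+1) * Real.Gamma (ν+1)) := by
        simp only [hedef, pow_zero, Nat.factorial_zero, Nat.cast_one, Nat.cast_zero, add_zero,
          one_mul]
        rw [show (ν+2 : ℝ) = (ν+1) + 1 by ring, Real.Gamma_add_one (by linarith)]
      have hP0 : P 0 = d 0 * d 0 := by simp [hPdef]
      have hQ0 : Q 0 = d 0 * e 0 := by simp [hQdef]
      rw [hP0, hQ0, hd0, he0]
      have key : 1 / Real.Gamma (ν+1) * (1 / Real.Gamma (ν+1))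
          - ν * (1 / Real.Gamma (ν+1) * (1 / ((ν+1) * Real.Gamma (ν+1))))
          = 1 / ((ν+1) * Real.Gamma (ν+1)^2) := by
        have h1 : Real.Gamma (ν+1) ≠ 0 := ne_of_gt hG
        have h2 : (ν+1 : ℝ) ≠ 0 := ne_of_gt (by linarith)
        field_simp
        ring
      rw [key]
      apply div_pos one_pos
      exact mul_pos (by linarith) (by positivity)
    | succ s =>
      rw [hR'succ, hP (s+1), hQ (s+1), hR s]
      have hsnn : (0:ℝ) ≤ s := Nat.cast_nonneg s
      have hGa : 0 < Real.Gamma ((ν+1) + ((s+1:ℕ):ℝ)) :=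
        Real.Gamma_pos_of_pos (by push_cast; linarith)
      have hΓb : Real.Gamma ((ν+2) + ((s+1:ℕ):ℝ)) = (ν + s + 2) * Real.Gamma ((ν+1) + ((s+1:ℕ):ℝ)) := by
        rw [show ((ν+2) + ((s+1:ℕ):ℝ)) = ((ν+1) + ((s+1:ℕ):ℝ)) + 1 by push_cast; ring,
          Real.Gamma_add_one (ne_of_gt (by push_cast; linarith))]
        congr 1
        push_cast
        ring
      have hΓc : Real.Gamma ((ν+2) + (s:ℝ)) = Real.Gamma ((ν+1) + ((s+1:ℕ):ℝ)) := by
        congr 1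
        push_cast
        ring
      have ha1 : asc ((ν+1) + (ν+1) + ((s+1:ℕ):ℝ) - 1) (s+1)
          = (2*ν + s + 2) * asc (2*ν + s + 3) s := by
        rw [show ((ν+1) + (ν+1) + ((s+1:ℕ):ℝ) - 1) = 2*ν + s + 2 by push_cast; ring, asc_succ']
        rw [show (2*ν + (s:ℝ) + 2 + 1) = 2*ν + s + 3 by ring]
      have ha2 : asc ((ν+1) + (ν+2) + ((s+1:ℕ):ℝ) - 1) (s+1)
          = asc (2*ν + s + 3) s * (2*ν + 2*s + 3) := by
        rw [show ((ν+1) + (ν+2) + ((s+1:ℕ):ℝ) - 1) = 2*ν + s + 3 by push_cast; ring, asc_succ]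
        congr 1
        ring
      have ha3 : asc ((ν+2) + (ν+2) + (s:ℝ) - 1) s = asc (2*ν + s + 3) s := by
        congr 1
        ring
      have hQ'pos : 0 < asc (2*ν + s + 3) s := asc_pos (by linarith) s
      have hfac : (((s+1).factorial : ℕ) : ℝ) = ((s:ℝ)+1) * (s.factorial : ℝ) := by
        rw [Nat.factorial_succ]; push_cast; ring
      rw [ha1, ha2, ha3, hΓb, hΓc, hfac]
      set Ga := Real.Gamma ((ν+1) + ((s+1:ℕ):ℝ)) with hGadef
      have hfacpos : (0:ℝ) < (s.factorial : ℝ) := by positivity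
      have key : t ^ (s+1) * ((2*ν + s + 2) * asc (2*ν + s + 3) s
            / ((((s:ℝ)+1) * (s.factorial : ℝ)) * Ga * Ga))
          - ν * (t ^ (s+1) * (asc (2*ν + s + 3) s * (2*ν + 2*s + 3)
            / ((((s:ℝ)+1) * (s.factorial : ℝ)) * Ga * ((ν + s + 2) * Ga))))
          - t * (t ^ s * (asc (2*ν + s + 3) s / ((s.factorial : ℝ) * Ga * Ga)))
          = t ^ (s+1) * asc (2*ν + s + 3) s * (2*ν + s + 2)
            / ((((s:ℝ)+1) * (s.factorial : ℝ)) * Ga * ((ν + s + 2) * Ga)) := by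
        have h1 : Ga ≠ 0 := ne_of_gt hGa
        have h2 : (s.factorial : ℝ) ≠ 0 := ne_of_gt hfacpos
        have h3 : (ν + (s:ℝ) + 2) ≠ 0 := ne_of_gt (by linarith)
        have h4 : ((s:ℝ)+1) ≠ 0 := by positivity
        field_simp
        ring
      rw [key]
      apply div_pos
      · exact mul_pos (mul_pos (pow_pos ht (s+1)) hQ'pos) (by linarith)
      · apply mul_pos (mul_pos (mul_pos (by positivity) hfacpos) hGa)
          (mul_pos (by linarith) hGa)
  -- the Turán-type inequality
  have hEeq : A*A - ν*(A*B) - t*(B*B) = ∑' s, (P s - ν * Q s - R' s) := by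
    rw [hAA, hAB, hBB, ← tsum_mul_left, htR,
      ← Summable.tsum_sub hPsum (hQsum.mul_left ν),
      ← Summable.tsum_sub (hPsum.sub (hQsum.mul_left ν)) hR'sum]
  have hEpos : 0 < A*A - ν*(A*B) - t*(B*B) := by
    rw [hEeq]
    exact Summable.tsum_pos ((hPsum.sub (hQsum.mul_left ν)).sub hR'sum)
      (fun s => (hcpos s).le) 0 (hcpos 0)
  -- identify the Bessel functions
  have hIν : besselI ν z = x ^ ν * A := by
    rw [hbI ν, hAdef, hddef]
  have hIν1 : besselI (ν+1) z = x ^ (ν+1) * B := by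
    rw [hbI (ν+1), hBdef, hedef]
    congr 2
    funext m
    congr 3
    ring
  have hIνpos : 0 < besselI ν z := by
    rw [hIν]
    have := Real.rpow_pos_of_pos hx ν
    positivity
  -- final algebra
  set s0 : ℝ := Real.sqrt (ν^2 + z^2) with hs0def
  have hs0nn : 0 ≤ s0 := Real.sqrt_nonneg _
  have hs0sq : s0^2 = ν^2 + z^2 := Real.sq_sqrt (by positivity)
  have hz2 : z^2 = 4*t := by rw [htdef, hxdef]; ring
  have h2AB : 0 < 2*A - ν*B := by
    rcases le_or_gt ν 0 with h | h
    · nlinarith [mul_nonneg (neg_nonneg.mpr h) hB.le]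
    · nlinarith [hEpos, mul_pos hA hB, mul_pos (mul_pos ht hB) hB, mul_pos hA hA]
  have h1 : s0 * B < 2*A - ν*B := by
    nlinarith [hEpos, mul_nonneg hs0nn hB.le, hs0sq, hz2, mul_pos hA hB]
  have hs0ν : 0 < s0 - ν := by nlinarith [hs0sq, ht, hs0nn, hz2]
  have hfin : 2*t*B < (s0 - ν) * A := by
    have h2 : (s0 + ν) * B < 2 * A := by linarith
    nlinarith [mul_lt_mul_of_pos_left h2 hs0ν, hs0sq, hz2]
  rw [hIν, hIν1, div_lt_div_iff₀ (by positivity) hz]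
  have hz2x : z = 2*x := by rw [hxdef]; ring
  rw [Real.rpow_add hx, Real.rpow_one, hz2x]
  have hxp : 0 < x ^ ν := Real.rpow_pos_of_pos hx ν
  calc x ^ ν * x * B * (2*x) = x ^ ν * (2*t*B) := by rw [htdef]; ring
    _ < x ^ ν * ((s0-ν)*A) := mul_lt_mul_of_pos_left hfin hxp
    _ = (-ν+s0) * (x ^ ν * A) := by ring
end

section
/- For every real number ν > -1 and every z > 0, the Turán-type inequality I_{ν−1}(z)·I_{ν+1}(z) < I_ν(z)² holds. -/
open Real Filter Set

namespace TuranAux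

/-- The `m`-th coefficient-term of the auxiliary series `f_a(t) = ∑ t^m/(m! Γ(m+a))`. -/
noncomputable def uu (t a : ℝ) (m : ℕ) : ℝ := t ^ m / (m.factorial * Real.Gamma ((m : ℝ) + a))

/-- `GG a j = 1/(j! Γ(j+a))`. -/
noncomputable def GG (a : ℝ) (j : ℕ) : ℝ := 1 / (j.factorial * Real.Gamma ((j : ℝ) + a))

lemma GG_pos {a : ℝ} (ha : 0 < a) (j : ℕ) : 0 < GG a j := by
  have h1 : (0 : ℝ) < (j : ℝ) + a := by positivity
  have h2 : 0 < Real.Gamma ((j : ℝ) + a) := Real.Gamma_pos_of_pos h1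
  have h3 : (0 : ℝ) < j.factorial := by exact_mod_cast j.factorial_pos
  unfold GG
  positivity

lemma one_div_Gamma_eq {x : ℝ} (hx : -1 < x) :
    1 / Real.Gamma x = x / Real.Gamma (x + 1) := by
  rcases eq_or_ne x 0 with h | h
  · simp [h, Real.Gamma_zero]
  · have hne : Real.Gamma x ≠ 0 := by
      apply Real.Gamma_ne_zero
      intro m
      cases m with
      | zero => simpa using h
      | succ k =>
        intro hc
        have hk : (0 : ℝ) ≤ (k : ℝ) := Nat.cast_nonneg k
        rw [hc] at hx
        push_cast at hx
        linarith
    rw [Real.Gamma_add_one h]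
    field_simp

lemma summable_norm_uu {t : ℝ} (ht : 0 < t) (a : ℝ) :
    Summable fun m : ℕ => ‖uu t a m‖ := by
  obtain ⟨M, hM⟩ := exists_nat_ge (max (1 - a) (2 * t))
  apply summable_of_ratio_norm_eventually_le (r := 1 / 2) (by norm_num)
  filter_upwards [Filter.eventually_ge_atTop M] with m hm
  have hm' : max (1 - a) (2 * t) ≤ (m : ℝ) := le_trans hM (by exact_mod_cast hm)
  have h1 : (1 : ℝ) ≤ (m : ℝ) + a := by
    have := le_trans (le_max_left _ _) hm'; linarith
  have h2 : 2 * t ≤ (m : ℝ) := le_trans (le_max_right _ _) hm'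
  have hpos : (0 : ℝ) < (m : ℝ) + a := by linarith
  have hG : 0 < Real.Gamma ((m : ℝ) + a) := Real.Gamma_pos_of_pos hpos
  have hfact : (0 : ℝ) < (m.factorial : ℝ) := by exact_mod_cast m.factorial_pos
  have hG1 : Real.Gamma (((m + 1 : ℕ) : ℝ) + a) = ((m : ℝ) + a) * Real.Gamma ((m : ℝ) + a) := by
    push_cast
    rw [show (m : ℝ) + 1 + a = ((m : ℝ) + a) + 1 by ring, Real.Gamma_add_one hpos.ne']
  have key : uu t a (m + 1) = (t / (((m : ℝ) + 1) * ((m : ℝ) + a))) * uu t a m := by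
    unfold uu
    rw [hG1, Nat.factorial_succ, pow_succ]
    push_cast
    field_simp
  rw [norm_norm, key, norm_mul, norm_norm]
  have hcoef : ‖t / (((m : ℝ) + 1) * ((m : ℝ) + a))‖ = t / (((m : ℝ) + 1) * ((m : ℝ) + a)) := by
    apply Real.norm_of_nonneg
    positivity
  rw [hcoef]
  apply mul_le_mul_of_nonneg_right _ (norm_nonneg _)
  rw [div_le_iff₀ (by positivity)]
  have hmn : (0 : ℝ) ≤ (m : ℝ) := Nat.cast_nonneg m
  nlinarith [mul_le_mul_of_nonneg_left h1 hmn]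

lemma summable_uu {t : ℝ} (ht : 0 < t) (a : ℝ) : Summable fun m : ℕ => uu t a m :=
  (summable_norm_uu ht a).of_norm

/-- rewriting `besselI` via `uu`. -/
lemma besselI_eq {ν z : ℝ} (hz : 0 < z) :
    besselI ν z = (z / 2) ^ ν * ∑' m : ℕ, uu ((z / 2) ^ 2) (ν + 1) m := by
  have hq : 0 < z / 2 := by linarith
  rw [besselI, ← tsum_mul_left]
  congr 1
  funext m
  have h1 : (z / 2) ^ (2 * (m : ℝ) + ν) = (z / 2) ^ ν * ((z / 2) ^ 2) ^ m := by
    rw [Real.rpow_add hq, mul_comm]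
    congr 1
    rw [show (2 : ℝ) * (m : ℝ) = ((2 * m : ℕ) : ℝ) by push_cast; ring,
      Real.rpow_natCast, pow_mul]
  rw [h1, uu, show (m : ℝ) + ν + 1 = (m : ℝ) + (ν + 1) by ring, mul_div_assoc]

/-- The key per-term identity: difference of Cauchy-product terms. -/
lemma term_eq {a : ℝ} (t : ℝ) (ha : 0 < a) {n k : ℕ} (hk : k ≤ n) :
    uu t a k * uu t a (n - k) - uu t (a - 1) k * uu t (a + 1) (n - k)
      = t ^ n * (((n : ℝ) + 1 - 2 * (k : ℝ)) * ((n : ℝ) + 1 - (k : ℝ)) *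
          (GG a k * GG a (n + 1 - k))) := by
  have hnk : ((n - k : ℕ) : ℝ) = (n : ℝ) - (k : ℝ) := by
    push_cast [Nat.cast_sub hk]; ring
  have hkr : (k : ℝ) ≤ (n : ℝ) := Nat.cast_le.2 hk
  have hpk : (0 : ℝ) < (k : ℝ) + a := by positivity
  have hpnk : (0 : ℝ) < ((n : ℝ) - (k : ℝ)) + a := by linarith
  have hGk : 0 < Real.Gamma ((k : ℝ) + a) := Real.Gamma_pos_of_pos hpk
  have hGnk : 0 < Real.Gamma (((n : ℝ) - (k : ℝ)) + a) := Real.Gamma_pos_of_pos hpnk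
  have hfk : (0 : ℝ) < (k.factorial : ℝ) := by exact_mod_cast k.factorial_pos
  have hfnk : (0 : ℝ) < ((n - k).factorial : ℝ) := by exact_mod_cast (n - k).factorial_pos
  have ht : t ^ k * t ^ (n - k) = t ^ n := by
    rw [← pow_add]; congr 1; omega
  -- uu t (a-1) k
  have eA : uu t (a - 1) k = t ^ k * ((k : ℝ) + a - 1) / (k.factorial * Real.Gamma ((k : ℝ) + a)) := by
    have hx : (-1 : ℝ) < (k : ℝ) + (a - 1) := by
      have : (0:ℝ) ≤ (k:ℝ) := Nat.cast_nonneg k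
      linarith
    have h2 : 1 / Real.Gamma ((k : ℝ) + (a - 1))
        = ((k : ℝ) + (a - 1)) / Real.Gamma ((k : ℝ) + a) := by
      have h3 := one_div_Gamma_eq hx
      rwa [show (k : ℝ) + (a - 1) + 1 = (k : ℝ) + a by ring] at h3
    have h2' : (Real.Gamma ((k : ℝ) + (a - 1)))⁻¹ = ((k : ℝ) + a - 1) / Real.Gamma ((k : ℝ) + a) := by
      rw [← one_div, h2]; ring_nf
    rw [uu, div_eq_mul_one_div, one_div, mul_inv, h2', eq_div_iff (by positivity)]
    field_simp
  -- uu t (a+1) (n-k)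
  have eB : uu t (a + 1) (n - k)
      = t ^ (n - k) / ((n - k).factorial * ((((n : ℝ) - (k : ℝ)) + a) * Real.Gamma (((n : ℝ) - (k : ℝ)) + a))) := by
    rw [uu, hnk, show ((n : ℝ) - (k : ℝ)) + (a + 1) = (((n : ℝ) - (k : ℝ)) + a) + 1 by ring,
      Real.Gamma_add_one hpnk.ne']
  -- uu t a (n-k)
  have eC : uu t a (n - k) = t ^ (n - k) / ((n - k).factorial * Real.Gamma (((n : ℝ) - (k : ℝ)) + a)) := by
    rw [uu, hnk]
  -- GG a (n+1-k)
  have hsub : n + 1 - k = (n - k) + 1 := by omega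
  have eD : GG a (n + 1 - k)
      = 1 / ((((n : ℝ) - (k : ℝ)) + 1) * (n - k).factorial *
          (((((n : ℝ) - (k : ℝ)) + a)) * Real.Gamma (((n : ℝ) - (k : ℝ)) + a))) := by
    rw [GG, hsub, Nat.factorial_succ]
    push_cast [Nat.cast_sub hk]
    rw [show (n : ℝ) - (k : ℝ) + 1 + a = (((n : ℝ) - (k : ℝ)) + a) + 1 by ring,
      Real.Gamma_add_one hpnk.ne']
  rw [eA, eB, eC, eD, uu, GG, ← ht]
  have h5 : ((n : ℝ) - (k : ℝ)) + 1 ≠ 0 := by linarith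
  field_simp
  ring

/-- Symmetrization: the weighted sum is nonnegative. -/
lemma sym_sum (m : ℕ) (g : ℕ → ℝ) (hg : ∀ j, 0 ≤ g j) :
    0 ≤ ∑ k ∈ Finset.range (m + 1),
      ((m : ℝ) - 2 * (k : ℝ)) * ((m : ℝ) - (k : ℝ)) * (g k * g (m - k)) := by
  set S := ∑ k ∈ Finset.range (m + 1),
      ((m : ℝ) - 2 * (k : ℝ)) * ((m : ℝ) - (k : ℝ)) * (g k * g (m - k)) with hS
  have h := Finset.sum_range_reflect
    (fun k => ((m : ℝ) - 2 * (k : ℝ)) * ((m : ℝ) - (k : ℝ)) * (g k * g (m - k))) (m + 1)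
  simp only [Nat.add_sub_cancel] at h
  have key : ∀ j ∈ Finset.range (m + 1),
      ((m : ℝ) - 2 * ((m - j : ℕ) : ℝ)) * ((m : ℝ) - ((m - j : ℕ) : ℝ)) * (g (m - j) * g (m - (m - j)))
        = (2 * (j : ℝ) - (m : ℝ)) * (j : ℝ) * (g j * g (m - j)) := by
    intro j hj
    have hj' : j ≤ m := Nat.lt_succ_iff.mp (Finset.mem_range.mp hj)
    rw [Nat.cast_sub hj', Nat.sub_sub_self hj', mul_comm (g (m - j)) (g j)]
    ring
  rw [Finset.sum_congr rfl key] at h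
  have h3 : ∑ k ∈ Finset.range (m + 1),
      (((m : ℝ) - 2 * (k : ℝ)) * ((m : ℝ) - (k : ℝ)) * (g k * g (m - k))
        + (2 * (k : ℝ) - (m : ℝ)) * (k : ℝ) * (g k * g (m - k)))
      = ∑ k ∈ Finset.range (m + 1), ((m : ℝ) - 2 * (k : ℝ)) ^ 2 * (g k * g (m - k)) :=
    Finset.sum_congr rfl (fun k _ => by ring)
  rw [Finset.sum_add_distrib, h] at h3
  have hnn : 0 ≤ ∑ k ∈ Finset.range (m + 1), ((m : ℝ) - 2 * (k : ℝ)) ^ 2 * (g k * g (m - k)) :=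
    Finset.sum_nonneg fun k _ => mul_nonneg (sq_nonneg _) (mul_nonneg (hg k) (hg _))
  linarith

lemma sum_le {a t : ℝ} (ha : 0 < a) (ht : 0 < t) (n : ℕ) :
    ∑ k ∈ Finset.range (n + 1), uu t (a - 1) k * uu t (a + 1) (n - k)
      ≤ ∑ k ∈ Finset.range (n + 1), uu t a k * uu t a (n - k) := by
  rw [← sub_nonneg, ← Finset.sum_sub_distrib]
  have h1 : ∑ k ∈ Finset.range (n + 1),
      (uu t a k * uu t a (n - k) - uu t (a - 1) k * uu t (a + 1) (n - k))
      = t ^ n * ∑ k ∈ Finset.range (n + 2),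
          (((n + 1 : ℕ) : ℝ) - 2 * (k : ℝ)) * (((n + 1 : ℕ) : ℝ) - (k : ℝ))
            * (GG a k * GG a ((n + 1) - k)) := by
    conv_rhs => rw [show n + 2 = (n + 1) + 1 from rfl, Finset.sum_range_succ]
    rw [show (((n + 1 : ℕ) : ℝ) - 2 * ((n + 1 : ℕ) : ℝ)) * (((n + 1 : ℕ) : ℝ) - ((n + 1 : ℕ) : ℝ))
          * (GG a (n + 1) * GG a ((n + 1) - (n + 1))) = 0 from by push_cast; ring]
    rw [add_zero, Finset.mul_sum]
    refine Finset.sum_congr rfl fun k hk => ?_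
    have hk' : k ≤ n := Nat.lt_succ_iff.mp (Finset.mem_range.mp hk)
    rw [term_eq t ha hk']
    push_cast
    ring
  rw [h1]
  have h2 := sym_sum (n + 1) (GG a) (fun j => (GG_pos ha j).le)
  exact mul_nonneg (pow_nonneg ht.le n) h2

lemma key_lt {a t : ℝ} (ha : 0 < a) (ht : 0 < t) :
    (∑' m : ℕ, uu t (a - 1) m) * (∑' m : ℕ, uu t (a + 1) m) < (∑' m : ℕ, uu t a m) ^ 2 := by
  rw [sq,
    tsum_mul_tsum_eq_tsum_sum_range_of_summable_norm (summable_norm_uu ht (a - 1))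
      (summable_norm_uu ht (a + 1)),
    tsum_mul_tsum_eq_tsum_sum_range_of_summable_norm (summable_norm_uu ht a)
      (summable_norm_uu ht a)]
  refine Summable.tsum_lt_tsum (i := 0) (fun n => sum_le ha ht n) ?_
    (summable_norm_sum_mul_range_of_summable_norm (summable_norm_uu ht (a - 1))
      (summable_norm_uu ht (a + 1))).of_norm
    (summable_norm_sum_mul_range_of_summable_norm (summable_norm_uu ht a)
      (summable_norm_uu ht a)).of_norm
  have h := term_eq t ha (n := 0) (k := 0) le_rfl
  have hg0 := GG_pos ha 0
  have hg1 := GG_pos ha 1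
  have h := term_eq (a := a) t ha (n := 0) (k := 0) le_rfl
  have hg0 := GG_pos ha 0
  have hg1 := GG_pos ha 1
  norm_num [Finset.sum_range_one] at h ⊢
  nlinarith [h, hg0, hg1]

end TuranAux

open TuranAux in
/-- Turán-type inequality: for every `ν > -1` and `z > 0`,
`I_{ν−1}(z)·I_{ν+1}(z) < I_ν(z)²`. -/
theorem stmt2 (ν z : ℝ) (hν : -1 < ν) (hz : 0 < z) :
    besselI (ν - 1) z * besselI (ν + 1) z < besselI ν z ^ 2 := by
  have hq : 0 < z / 2 := by linarith
  have ht : 0 < ((z / 2) ^ 2 : ℝ) := by positivity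
  have ha : 0 < ν + 1 := by linarith
  rw [besselI_eq (ν := ν - 1) hz, besselI_eq (ν := ν + 1) hz, besselI_eq (ν := ν) hz]
  have hk := key_lt (a := ν + 1) (t := (z / 2) ^ 2) ha ht
  rw [show ν + 1 - 1 = ν - 1 + 1 by ring] at hk
  have hr : (z / 2) ^ (ν - 1 : ℝ) * (z / 2) ^ (ν + 1 : ℝ) = ((z / 2) ^ (ν : ℝ)) ^ 2 := by
    rw [← Real.rpow_add hq, sq, ← Real.rpow_add hq]
    norm_num
  calc (z / 2) ^ (ν - 1 : ℝ) * (∑' m : ℕ, uu ((z / 2) ^ 2) (ν - 1 + 1) m)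
        * ((z / 2) ^ (ν + 1 : ℝ) * ∑' m : ℕ, uu ((z / 2) ^ 2) (ν + 1 + 1) m)
      = ((z / 2) ^ (ν - 1 : ℝ) * (z / 2) ^ (ν + 1 : ℝ))
        * ((∑' m : ℕ, uu ((z / 2) ^ 2) (ν - 1 + 1) m) * ∑' m : ℕ, uu ((z / 2) ^ 2) (ν + 1 + 1) m) := by
        ring
    _ = ((z / 2) ^ (ν : ℝ)) ^ 2
        * ((∑' m : ℕ, uu ((z / 2) ^ 2) (ν - 1 + 1) m) * ∑' m : ℕ, uu ((z / 2) ^ 2) (ν + 1 + 1) m) := by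
        rw [hr]
    _ < ((z / 2) ^ (ν : ℝ)) ^ 2 * (∑' m : ℕ, uu ((z / 2) ^ 2) (ν + 1) m) ^ 2 := by
        apply mul_lt_mul_of_pos_left _ (by positivity)
        exact hk
    _ = ((z / 2) ^ (ν : ℝ) * ∑' m : ℕ, uu ((z / 2) ^ 2) (ν + 1) m) ^ 2 := by ring
end

section
/- For every integer k ≥ 0, the function G_k(z) := z·I_k'(z)/I_k(z) has positive derivative on (0, +∞); in particular G_k is strictly increasing on (0, +∞). -/
open Real Filter Set

namespace Stmt3Aux

open Topology

noncomputable def bA (k m : ℕ) : ℝ :=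
  1 / (4 ^ m * 2 ^ k * (m.factorial : ℝ) * ((m + k).factorial : ℝ))

lemma bA_pos (k m : ℕ) : 0 < bA k m := by
  have h1 : (0:ℝ) < (m.factorial : ℝ) := by exact_mod_cast m.factorial_pos
  have h2 : (0:ℝ) < ((m+k).factorial : ℝ) := by exact_mod_cast (m+k).factorial_pos
  unfold bA; positivity

lemma bA_rec (k m : ℕ) : bA k m = (4 * ((m:ℝ) + 1) * ((m:ℝ) + 1 + k)) * bA k (m + 1) := by
  have h : (m + 1 + k).factorial = (m + k + 1) * (m + k).factorial := by
    rw [show m + 1 + k = (m + k) + 1 by omega, Nat.factorial_succ]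
  have h2 : (m + 1).factorial = (m + 1) * m.factorial := Nat.factorial_succ m
  have f1 : (0:ℝ) < (m.factorial : ℝ) := by exact_mod_cast m.factorial_pos
  have f2 : (0:ℝ) < ((m+k).factorial : ℝ) := by exact_mod_cast (m+k).factorial_pos
  unfold bA
  rw [h, h2]
  push_cast
  have h4 : (0:ℝ) < 4 ^ m := by positivity
  have h2k : (0:ℝ) < 2 ^ k := by positivity
  field_simp
  ring

lemma norm_term_le (k m : ℕ) {z R : ℝ} (hz : |z| ≤ R) (hR : 1 ≤ R) (c : ℕ)
    (hc : c ≤ (2 * m + k + 2) ^ 2) {j : ℕ} (hj : j ≤ 2 * m + k) :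
    ‖(c : ℝ) * bA k m * z ^ j‖ ≤ ((2 * m + k + 2 : ℕ) : ℝ) ^ 2 * bA k m * R ^ (2 * m + k) := by
  have hR0 : (0:ℝ) ≤ R := le_trans zero_le_one hR
  have h1 : ‖(c : ℝ) * bA k m * z ^ j‖ = (c:ℝ) * bA k m * |z| ^ j := by
    rw [norm_mul, norm_mul, norm_pow, Real.norm_eq_abs, Real.norm_eq_abs, Real.norm_eq_abs,
      Nat.abs_cast, abs_of_pos (bA_pos k m)]
  rw [h1]
  have h2 : |z| ^ j ≤ R ^ (2 * m + k) := by
    calc |z| ^ j ≤ R ^ j := pow_le_pow_left₀ (abs_nonneg z) hz j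
    _ ≤ R ^ (2 * m + k) := pow_le_pow_right₀ hR hj
  have h3 : (c:ℝ) ≤ ((2 * m + k + 2 : ℕ) : ℝ) ^ 2 := by
    push_cast
    exact_mod_cast Nat.cast_le.mpr hc
  have hb := (bA_pos k m).le
  calc (c:ℝ) * bA k m * |z| ^ j ≤ (c:ℝ) * bA k m * R ^ (2*m+k) := by
        apply mul_le_mul_of_nonneg_left h2 (by positivity)
    _ ≤ ((2 * m + k + 2 : ℕ) : ℝ) ^ 2 * bA k m * R ^ (2*m+k) := by
        apply mul_le_mul_of_nonneg_right (mul_le_mul_of_nonneg_right h3 hb) (by positivity)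

lemma summable_u (k : ℕ) {R : ℝ} (hR : 1 ≤ R) :
    Summable (fun m : ℕ => ((2 * m + k + 2 : ℕ) : ℝ) ^ 2 * bA k m * R ^ (2 * m + k)) := by
  have hR0 : (0:ℝ) < R := lt_of_lt_of_le zero_lt_one hR
  apply summable_of_ratio_norm_eventually_le (r := 1/2) (by norm_num)
  filter_upwards [eventually_ge_atTop ⌈2 * R ^ 2⌉₊] with m hm
  have hm' : 2 * R ^ 2 ≤ (m : ℝ) := le_trans (Nat.le_ceil _) (by exact_mod_cast hm)
  have hb := bA_pos k (m+1)
  have hbm := bA_pos k m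
  have hk0 : (0:ℝ) ≤ (k:ℝ) := Nat.cast_nonneg k
  have hm0 : (0:ℝ) ≤ (m:ℝ) := Nat.cast_nonneg m
  have key : ((2 * (m+1) + k + 2 : ℕ) : ℝ) ^ 2 * R ^ 2
      ≤ 1/2 * (((2 * m + k + 2 : ℕ) : ℝ) ^ 2 * (4 * ((m:ℝ) + 1) * ((m:ℝ) + 1 + k))) := by
    push_cast
    have h1sq : (2 * ((m:ℝ)+1) + k + 2) ^ 2 ≤ 4 * (2 * (m:ℝ) + k + 2) ^ 2 := by nlinarith
    have h2 : R ^ 2 ≤ ((m:ℝ) + 1) / 2 := by linarith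
    calc (2 * ((m:ℝ)+1) + k + 2) ^ 2 * R ^ 2
        ≤ (4 * (2 * (m:ℝ) + k + 2) ^ 2) * (((m:ℝ) + 1) / 2) :=
          mul_le_mul h1sq h2 (sq_nonneg R) (by positivity)
      _ ≤ 1/2 * ((2 * (m:ℝ) + k + 2) ^ 2 * (4 * ((m:ℝ) + 1) * ((m:ℝ) + 1 + k))) := by
          nlinarith [mul_nonneg (mul_nonneg (sq_nonneg (2 * (m:ℝ) + k + 2)) (show (0:ℝ) ≤ (m:ℝ) + 1 by linarith)) (show (0:ℝ) ≤ (m:ℝ) + (k:ℝ) by linarith)]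
  have e1 : ((2 * (m+1) + k + 2 : ℕ) : ℝ) ^ 2 * bA k (m+1) * R ^ (2 * (m+1) + k)
      = (((2 * (m+1) + k + 2 : ℕ) : ℝ) ^ 2 * R ^ 2) * (bA k (m+1) * R ^ (2 * m + k)) := by
    rw [show 2 * (m+1) + k = (2*m+k) + 2 by omega, pow_add]; ring
  have e2 : ((2 * m + k + 2 : ℕ) : ℝ) ^ 2 * bA k m * R ^ (2 * m + k)
      = (((2 * m + k + 2 : ℕ) : ℝ) ^ 2 * (4 * ((m:ℝ) + 1) * ((m:ℝ) + 1 + k))) * (bA k (m+1) * R ^ (2 * m + k)) := by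
    rw [bA_rec k m]; ring
  have pc1 : (0:ℝ) < ((2 * (m+1) + k + 2 : ℕ) : ℝ) ^ 2 := by
    have : (0:ℝ) < ((2 * (m+1) + k + 2 : ℕ) : ℝ) := by exact_mod_cast Nat.succ_pos (2*(m+1)+k+1)
    positivity
  have pc2 : (0:ℝ) < ((2 * m + k + 2 : ℕ) : ℝ) ^ 2 := by
    have : (0:ℝ) < ((2 * m + k + 2 : ℕ) : ℝ) := by exact_mod_cast Nat.succ_pos (2*m+k+1)
    positivity
  have hBP : (0:ℝ) ≤ bA k (m+1) * R ^ (2*m+k) := mul_nonneg hb.le (by positivity)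
  rw [Real.norm_eq_abs, Real.norm_eq_abs,
    abs_of_pos (mul_pos (mul_pos pc1 hb) (by positivity)),
    abs_of_pos (mul_pos (mul_pos pc2 hbm) (by positivity)), e1, e2]
  nlinarith [mul_le_mul_of_nonneg_right key hBP]

noncomputable def bG (k : ℕ) (z : ℝ) : ℝ := ∑' m : ℕ, bA k m * z ^ (2 * m + k)

noncomputable def bG1 (k : ℕ) (z : ℝ) : ℝ :=
  ∑' m : ℕ, ((2 * m + k : ℕ) : ℝ) * bA k m * z ^ (2 * m + k - 1)

noncomputable def bG2 (k : ℕ) (z : ℝ) : ℝ :=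
  ∑' m : ℕ, ((2 * m + k : ℕ) : ℝ) * ((2 * m + k - 1 : ℕ) : ℝ) * bA k m * z ^ (2 * m + k - 2)

lemma summable_aux (k : ℕ) (z : ℝ) (f : ℕ → ℝ)
    (h : ∀ m, ‖f m‖ ≤ ((2 * m + k + 2 : ℕ) : ℝ) ^ 2 * bA k m * (|z| + 1) ^ (2 * m + k)) :
    Summable f :=
  Summable.of_norm_bounded (summable_u k (by linarith [abs_nonneg z])) h

lemma abs_le_R (z : ℝ) : |z| ≤ |z| + 1 := by linarith
lemma one_le_R (z : ℝ) : 1 ≤ |z| + 1 := by linarith [abs_nonneg z]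

lemma summable_bG (k : ℕ) (z : ℝ) : Summable (fun m : ℕ => bA k m * z ^ (2 * m + k)) := by
  apply summable_aux k z
  intro m
  have := norm_term_le k m (abs_le_R z) (one_le_R z) 1 (Nat.one_le_pow _ _ (by omega)) (le_refl (2*m+k))
  simpa using this

lemma summable_bG1 (k : ℕ) (z : ℝ) :
    Summable (fun m : ℕ => ((2 * m + k : ℕ) : ℝ) * bA k m * z ^ (2 * m + k - 1)) := by
  apply summable_aux k z
  intro m
  exact norm_term_le k m (abs_le_R z) (one_le_R z) (2*m+k) (by nlinarith) (Nat.sub_le _ _)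

lemma summable_bG2 (k : ℕ) (z : ℝ) :
    Summable (fun m : ℕ => ((2 * m + k : ℕ) : ℝ) * ((2 * m + k - 1 : ℕ) : ℝ) * bA k m * z ^ (2 * m + k - 2)) := by
  apply summable_aux k z
  intro m
  have hc : (2*m+k) * (2*m+k-1) ≤ (2*m+k+2)^2 := by
    calc (2*m+k) * (2*m+k-1) ≤ (2*m+k+2) * (2*m+k+2) := Nat.mul_le_mul (by omega) (by omega)
      _ = (2*m+k+2)^2 := (pow_two _).symm
  have := norm_term_le k m (abs_le_R z) (one_le_R z) ((2*m+k)*(2*m+k-1)) hc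
    (Nat.sub_le (2*m+k) 2)
  rw [Nat.cast_mul] at this
  simpa [mul_assoc] using this

lemma summable_S (k : ℕ) (z : ℝ) :
    Summable (fun m : ℕ => ((2 * m + k : ℕ) : ℝ) ^ 2 * bA k m * z ^ (2 * m + k)) := by
  apply summable_aux k z
  intro m
  have := norm_term_le k m (abs_le_R z) (one_le_R z) ((2*m+k)^2)
    (Nat.pow_le_pow_left (by omega) 2) (le_refl (2*m+k))
  rw [Nat.cast_pow] at this
  exact this

lemma summable_d (k : ℕ) (z : ℝ) :
    Summable (fun m : ℕ => 4 * (m:ℝ) * ((m:ℝ) + k) * bA k m * z ^ (2 * m + k)) := by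
  apply summable_aux k z
  intro m
  have hc : 4 * m * (m + k) ≤ (2*m+k+2)^2 := by nlinarith
  have := norm_term_le k m (abs_le_R z) (one_le_R z) (4 * m * (m+k)) hc (le_refl (2*m+k))
  have e : ((4 * m * (m+k) : ℕ) : ℝ) = 4 * (m:ℝ) * ((m:ℝ) + k) := by push_cast; ring
  rw [e] at this
  exact this

set_option maxHeartbeats 1000000 in
lemma hasDerivAt_bG (k : ℕ) (z : ℝ) : HasDerivAt (bG k) (bG1 k z) z := by
  have hR := one_le_R z
  unfold bG bG1
  apply hasDerivAt_tsum_of_isPreconnected (summable_u k hR)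
    (isOpen_Ioo (a := -(|z|+1)) (b := |z|+1)) (convex_Ioo _ _).isPreconnected
    (g' := fun m y => ((2 * m + k : ℕ) : ℝ) * bA k m * y ^ (2 * m + k - 1))
    (fun m y _ => ?_) (fun m y hy => ?_) (y₀ := 0) (mem_Ioo.mpr ⟨by linarith [abs_nonneg z], by linarith [abs_nonneg z]⟩)
    (summable_bG k 0) (mem_Ioo.mpr ⟨by linarith [neg_abs_le z], by linarith [le_abs_self z]⟩)
  · have h := (hasDerivAt_pow (2*m+k) y).const_mul (bA k m)
    convert h using 1
    · rfl
    ring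
  · have hy' : |y| ≤ |z| + 1 := le_of_lt (abs_lt.mpr hy)
    exact norm_term_le k m hy' hR (2*m+k) (by nlinarith) (Nat.sub_le _ _)

set_option maxHeartbeats 1000000 in
lemma hasDerivAt_bG1 (k : ℕ) (z : ℝ) : HasDerivAt (bG1 k) (bG2 k z) z := by
  have hR := one_le_R z
  unfold bG1 bG2
  apply hasDerivAt_tsum_of_isPreconnected (summable_u k hR)
    (isOpen_Ioo (a := -(|z|+1)) (b := |z|+1)) (convex_Ioo _ _).isPreconnected
    (g := fun m y => ((2 * m + k : ℕ) : ℝ) * bA k m * y ^ (2 * m + k - 1))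
    (g' := fun m y => ((2 * m + k : ℕ) : ℝ) * ((2 * m + k - 1 : ℕ) : ℝ) * bA k m * y ^ (2 * m + k - 2))
    (fun m y _ => ?_) (fun m y hy => ?_) (y₀ := 0) (mem_Ioo.mpr ⟨by linarith [abs_nonneg z], by linarith [abs_nonneg z]⟩)
    (summable_bG1 k 0) (mem_Ioo.mpr ⟨by linarith [neg_abs_le z], by linarith [le_abs_self z]⟩)
  · have h := (hasDerivAt_pow (2*m+k-1) y).const_mul (((2 * m + k : ℕ) : ℝ) * bA k m)
    rw [show 2*m+k-1-1 = 2*m+k-2 from by omega] at h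
    convert h using 1
    · rfl
    ring
  · have hy' : |y| ≤ |z| + 1 := le_of_lt (abs_lt.mpr hy)
    have hc : (2*m+k) * (2*m+k-1) ≤ (2*m+k+2)^2 := by
      calc (2*m+k) * (2*m+k-1) ≤ (2*m+k+2) * (2*m+k+2) := Nat.mul_le_mul (by omega) (by omega)
        _ = (2*m+k+2)^2 := (pow_two _).symm
    have := norm_term_le k m hy' hR ((2*m+k)*(2*m+k-1)) hc (Nat.sub_le (2*m+k) 2)
    rw [Nat.cast_mul] at this
    simpa [mul_assoc] using this

lemma bG_pos (k : ℕ) {z : ℝ} (hz : 0 < z) : 0 < bG k z := by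
  apply Summable.tsum_pos (summable_bG k z) (fun m => mul_nonneg (bA_pos k m).le (pow_nonneg hz.le _)) 0
  exact mul_pos (bA_pos k 0) (pow_pos hz _)

lemma pow_identity (n : ℕ) (a z : ℝ) :
    z ^ 2 * ((n:ℝ) * ((n - 1 : ℕ) : ℝ) * a * z ^ (n - 2)) + z * ((n:ℝ) * a * z ^ (n - 1))
      = (n:ℝ) ^ 2 * a * z ^ n := by
  match n with
  | 0 => simp
  | 1 => norm_num; ring
  | (n+2) =>
    simp only [show n + 2 - 2 = n from rfl, show n + 2 - 1 = n + 1 from rfl]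
    push_cast
    ring

lemma ode (k : ℕ) (z : ℝ) :
    z ^ 2 * bG2 k z + z * bG1 k z = (z ^ 2 + (k:ℝ) ^ 2) * bG k z := by
  have hS : z ^ 2 * bG2 k z + z * bG1 k z
      = ∑' m : ℕ, ((2 * m + k : ℕ) : ℝ) ^ 2 * bA k m * z ^ (2 * m + k) := by
    unfold bG1 bG2
    rw [← tsum_mul_left, ← tsum_mul_left,
      ← Summable.tsum_add ((summable_bG2 k z).mul_left (z ^ 2)) ((summable_bG1 k z).mul_left z)]
    exact tsum_congr fun m => pow_identity (2 * m + k) (bA k m) z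
  have hd : (∑' m : ℕ, 4 * (m:ℝ) * ((m:ℝ) + k) * bA k m * z ^ (2 * m + k))
      = z ^ 2 * bG k z := by
    rw [Summable.tsum_eq_zero_add (summable_d k z)]
    have h0 : 4 * ((0:ℕ):ℝ) * (((0:ℕ):ℝ) + k) * bA k 0 * z ^ (2 * 0 + k) = 0 := by
      simp
    have hshift : ∀ m : ℕ,
        4 * ((m + 1 : ℕ):ℝ) * (((m + 1 : ℕ):ℝ) + k) * bA k (m+1) * z ^ (2 * (m+1) + k)
          = z ^ 2 * (bA k m * z ^ (2 * m + k)) := by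
      intro m
      rw [bA_rec k m, show 2 * (m+1) + k = (2 * m + k) + 2 from by omega, pow_add]
      push_cast
      ring
    rw [h0, zero_add, tsum_congr hshift, tsum_mul_left]
    rfl
  have hsplit : ∀ m : ℕ, ((2 * m + k : ℕ) : ℝ) ^ 2 * bA k m * z ^ (2 * m + k)
      = (k:ℝ) ^ 2 * (bA k m * z ^ (2 * m + k))
        + 4 * (m:ℝ) * ((m:ℝ) + k) * bA k m * z ^ (2 * m + k) := by
    intro m; push_cast; ring
  rw [hS, tsum_congr hsplit,
    Summable.tsum_add ((summable_bG k z).mul_left ((k:ℝ) ^ 2)) (summable_d k z), tsum_mul_left, hd]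
  unfold bG
  ring

noncomputable def W (k : ℕ) (z : ℝ) : ℝ :=
  (z ^ 2 + (k:ℝ) ^ 2) * (bG k z) ^ 2 - z ^ 2 * (bG1 k z) ^ 2

lemma hasDerivAt_W (k : ℕ) (z : ℝ) : HasDerivAt (W k) (2 * z * (bG k z) ^ 2) z := by
  have h1 : HasDerivAt (fun z : ℝ => z ^ 2 + (k:ℝ) ^ 2) (2 * z) z := by
    simpa using (hasDerivAt_pow 2 z).add_const ((k:ℝ) ^ 2)
  have hg := hasDerivAt_bG k z
  have hg1 := hasDerivAt_bG1 k z
  have h2 : HasDerivAt (fun z => (bG k z) ^ 2) (2 * bG k z * bG1 k z) z := by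
    simpa using hg.fun_pow 2
  have h3 : HasDerivAt (fun z => (bG1 k z) ^ 2) (2 * bG1 k z * bG2 k z) z := by
    simpa using hg1.fun_pow 2
  have hz2 : HasDerivAt (fun z : ℝ => z ^ 2) (2 * z) z := by simpa using hasDerivAt_pow 2 z
  have h4 := (h1.mul h2).sub (hz2.mul h3)
  have h5 : HasDerivAt (W k)
      ((2 * z * (bG k z) ^ 2 + (z ^ 2 + (k:ℝ) ^ 2) * (2 * bG k z * bG1 k z))
        - (2 * z * (bG1 k z) ^ 2 + z ^ 2 * (2 * bG1 k z * bG2 k z))) z := h4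
  convert h5 using 1
  linear_combination (2 * bG1 k z) * ode k z

lemma W_zero (k : ℕ) : W k 0 = 0 := by
  rcases k with _ | k
  · simp [W]
  · have h : bG (k + 1) 0 = 0 := by
      unfold bG
      rw [tsum_congr (fun m : ℕ => ?_), tsum_zero]
      rw [zero_pow (by omega : 2 * m + (k + 1) ≠ 0), mul_zero]
    simp [W, h]

lemma W_pos (k : ℕ) {z : ℝ} (hz : 0 < z) : 0 < W k z := by
  have hmono : StrictMonoOn (W k) (Ici 0) := by
    apply strictMonoOn_of_deriv_pos (convex_Ici 0)
    · exact fun x _ => (hasDerivAt_W k x).differentiableAt.continuousAt.continuousWithinAt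
    · intro x hx
      rw [interior_Ici] at hx
      rw [(hasDerivAt_W k x).deriv]
      exact mul_pos (mul_pos two_pos hx) (pow_pos (bG_pos k hx) 2)
  have h := hmono self_mem_Ici (le_of_lt hz) hz
  rwa [W_zero] at h

lemma besselI_eq (k : ℕ) {z : ℝ} (hz : 0 < z) : besselI k z = bG k z := by
  unfold besselI bG
  apply tsum_congr
  intro m
  have hg : Real.Gamma ((m:ℝ) + k + 1) = ((m + k).factorial : ℝ) := by
    rw [show (m:ℝ) + k + 1 = ((m + k : ℕ) : ℝ) + 1 by push_cast; ring,
      Real.Gamma_nat_eq_factorial]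
  have hp : (z / 2) ^ (2 * (m:ℝ) + k) = (z / 2) ^ (2 * m + k : ℕ) := by
    rw [show 2 * (m:ℝ) + k = ((2 * m + k : ℕ) : ℝ) by push_cast; ring, Real.rpow_natCast]
  rw [hg, hp, div_pow]
  unfold bA
  rw [show (2:ℝ) ^ (2 * m + k) = 4 ^ m * 2 ^ k by rw [pow_add, pow_mul]; norm_num]
  have f1 : ((m.factorial : ℕ) : ℝ) ≠ 0 := by exact_mod_cast m.factorial_pos.ne'
  have f2 : (((m + k).factorial : ℕ) : ℝ) ≠ 0 := by exact_mod_cast (m + k).factorial_pos.ne'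
  have f3 : (4:ℝ) ^ m ≠ 0 := by positivity
  have f4 : (2:ℝ) ^ k ≠ 0 := by positivity
  field_simp

lemma deriv_besselI (k : ℕ) {z : ℝ} (hz : 0 < z) : deriv (besselI k) z = bG1 k z := by
  have hev : besselI k =ᶠ[𝓝 z] bG k := by
    filter_upwards [Ioi_mem_nhds hz] with w hw
    exact besselI_eq k hw
  rw [hev.deriv_eq, (hasDerivAt_bG k z).deriv]

lemma key (k : ℕ) {z : ℝ} (hz : 0 < z) :
    HasDerivAt (fun w : ℝ => w * deriv (besselI k) w / besselI k w)
      (W k z / (z * (bG k z) ^ 2)) z := by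
  have hgpos := bG_pos k hz
  have hd : HasDerivAt (fun w : ℝ => w * bG1 k w / bG k w)
      (((1 * bG1 k z + z * bG2 k z) * bG k z - z * bG1 k z * bG1 k z) / (bG k z) ^ 2) z :=
    ((hasDerivAt_id z).mul (hasDerivAt_bG1 k z)).div (hasDerivAt_bG k z) hgpos.ne'
  have heq : ((1 * bG1 k z + z * bG2 k z) * bG k z - z * bG1 k z * bG1 k z) / (bG k z) ^ 2
      = W k z / (z * (bG k z) ^ 2) := by
    rw [div_eq_div_iff (pow_pos hgpos 2).ne' (mul_pos hz (pow_pos hgpos 2)).ne']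
    unfold W
    linear_combination (bG k z) ^ 2 * bG k z * ode k z
  rw [heq] at hd
  apply hd.congr_of_eventuallyEq
  filter_upwards [Ioi_mem_nhds hz] with w hw
  rw [besselI_eq k hw, deriv_besselI k hw]

end Stmt3Aux

/-- For every integer `k ≥ 0`, the function `G_k(z) = z·I_k'(z)/I_k(z)` has positive
derivative on `(0,∞)`; in particular it is strictly increasing there. -/
theorem stmt3 (k : ℕ) :
    (∀ z ∈ Set.Ioi (0 : ℝ),
      0 < deriv (fun z : ℝ => z * deriv (besselI k) z / besselI k z) z) ∧
    StrictMonoOn (fun z : ℝ => z * deriv (besselI k) z / besselI k z) (Set.Ioi 0) := by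
  have hpos : ∀ z ∈ Set.Ioi (0 : ℝ),
      0 < deriv (fun z : ℝ => z * deriv (besselI k) z / besselI k z) z := by
    intro z hz
    have hz' : (0:ℝ) < z := hz
    rw [(Stmt3Aux.key k hz').deriv]
    exact div_pos (Stmt3Aux.W_pos k hz')
      (mul_pos hz' (pow_pos (Stmt3Aux.bG_pos k hz') 2))
  refine ⟨hpos, ?_⟩
  apply strictMonoOn_of_deriv_pos (convex_Ioi 0)
  · intro z hz
    exact (Stmt3Aux.key k hz).differentiableAt.continuousAt.continuousWithinAt
  · intro z hz
    rw [interior_Ioi] at hz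
    exact hpos z hz
end

section
/- Let κ > 0 and k ∈ ℕ, and let j_{k,ℓ} denote the ℓ-th positive zero of J_k. For each ℓ ≥ 1, the function F̃_k(α) = (κ/α)·I_{k+1}(κ/α)/I_k(κ/α) + α·J_{k+1}(α)/J_k(α) satisfies lim_{α → j_{k,ℓ}⁺} F̃_k(α) = −∞ and F̃_k(j_{k+1,ℓ}) > 0. Consequently F̃_k possesses at least one root in the interval (j_{k,ℓ}, j_{k+1,ℓ}). -/
open Real Filter Set

/-- The function `F̃_k` from the paper (here `κ > 0`, `k ∈ ℕ`). -/
noncomputable def Ftilde (κ : ℝ) (k : ℕ) (α : ℝ) : ℝ :=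
  (κ / α) * besselI (k + 1) (κ / α) / besselI k (κ / α)
    + α * besselJ (k + 1) α / besselJ k α

noncomputable def SS (ε : ℕ → ℝ) (k : ℕ) (y : ℝ) : ℝ :=
  ∑' m : ℕ, ε m * y ^ m / (4 ^ m * m.factorial * (m + k).factorial)

lemma Cpos (m k : ℕ) : (0:ℝ) < 4 ^ m * m.factorial * (m + k).factorial := by
  positivity

lemma Cge (m k : ℕ) : (m.factorial : ℝ) ≤ 4 ^ m * m.factorial * (m + k).factorial := by
  have h1 : (1:ℝ) ≤ 4 ^ m := one_le_pow₀ (by norm_num)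
  have h2 : (1:ℝ) ≤ (m + k).factorial := by exact_mod_cast (m + k).factorial_pos
  have h3 : (0:ℝ) < m.factorial := by exact_mod_cast m.factorial_pos
  calc (m.factorial : ℝ) = 1 * (m.factorial : ℝ) * 1 := by ring
    _ ≤ 4 ^ m * m.factorial * (m + k).factorial := by gcongr

lemma SS_summable (ε : ℕ → ℝ) (hε : ∀ m, |ε m| ≤ 1) (k : ℕ) (y : ℝ) :
    Summable (fun m : ℕ => ε m * y ^ m / (4 ^ m * m.factorial * (m + k).factorial)) := by
  have hg : Summable (fun m : ℕ => |y| ^ m / (m.factorial : ℝ)) :=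
    Real.summable_pow_div_factorial |y|
  apply Summable.of_norm_bounded hg
  intro m
  rw [Real.norm_eq_abs, abs_div, abs_mul, abs_pow, abs_of_pos (Cpos m k)]
  calc |ε m| * |y| ^ m / (4 ^ m * m.factorial * (m + k).factorial)
      ≤ 1 * |y| ^ m / (4 ^ m * m.factorial * (m + k).factorial) := by
        gcongr; exact hε m
    _ = |y| ^ m / (4 ^ m * m.factorial * (m + k).factorial) := by ring
    _ ≤ |y| ^ m / m.factorial := by
        gcongr
        exact Cge m k

lemma summable_deriv_bound (R : ℝ) :
    Summable (fun m : ℕ => (m : ℝ) * R ^ (m - 1) / m.factorial) := by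
  rw [← summable_nat_add_iff 1]
  apply Summable.congr (Real.summable_pow_div_factorial R)
  intro n
  rw [Nat.add_sub_cancel, Nat.factorial_succ]
  push_cast
  have h : ((n:ℝ) + 1) ≠ 0 := by positivity
  field_simp

lemma SS_hasDerivAt (ε : ℕ → ℝ) (hε : ∀ m, |ε m| ≤ 1) (k : ℕ) (y : ℝ) :
    HasDerivAt (SS ε k) (SS (fun m => ε (m + 1)) (k + 1) y / 4) y := by
  set R : ℝ := |y| + 1 with hR
  have hyR : y ∈ Ioo (-R) R := by
    constructor
    · nlinarith [neg_abs_le y, abs_nonneg y]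
    · nlinarith [le_abs_self y, abs_nonneg y]
  set g : ℕ → ℝ → ℝ := fun m w => ε m * w ^ m / (4 ^ m * m.factorial * (m + k).factorial)
    with hg
  set g' : ℕ → ℝ → ℝ :=
    fun m z => ε m * ((m : ℝ) * z ^ (m - 1)) / (4 ^ m * m.factorial * (m + k).factorial)
    with hg'
  have hderiv : ∀ (m : ℕ), ∀ z ∈ Ioo (-R) R, HasDerivAt (g m) (g' m z) z := fun m z _ =>
    ((hasDerivAt_pow m z).const_mul (ε m)).div_const _
  have hbound : ∀ (m : ℕ), ∀ z ∈ Ioo (-R) R,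
      ‖g' m z‖ ≤ (m : ℝ) * R ^ (m - 1) / m.factorial := by
    intro m z hz
    have hzR : |z| ≤ R := by rw [abs_le]; exact ⟨hz.1.le, hz.2.le⟩
    have hRpos : (0:ℝ) ≤ R := by positivity
    rw [hg', Real.norm_eq_abs, abs_div, abs_mul, abs_mul, abs_pow, abs_of_pos (Cpos m k)]
    have hm : |(m:ℝ)| = (m:ℝ) := abs_of_nonneg (Nat.cast_nonneg m)
    calc |ε m| * (|(m:ℝ)| * |z| ^ (m-1)) / (4 ^ m * m.factorial * (m + k).factorial)
        ≤ 1 * ((m:ℝ) * R ^ (m-1)) / (4 ^ m * m.factorial * (m + k).factorial) := by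
          rw [hm]; gcongr; exact hε m
      _ = ((m:ℝ) * R ^ (m-1)) / (4 ^ m * m.factorial * (m + k).factorial) := by ring
      _ ≤ ((m:ℝ) * R ^ (m-1)) / m.factorial := by
          gcongr
          exact Cge m k
  have hsum0 : Summable (fun m => g m y) := SS_summable ε hε k y
  have key := hasDerivAt_tsum_of_isPreconnected (summable_deriv_bound R)
    isOpen_Ioo (convex_Ioo (-R) R).isPreconnected hderiv hbound hyR hsum0 hyR
  have hsum' : Summable (fun m => g' m y) := by
    apply Summable.of_norm_bounded (summable_deriv_bound R)
    intro m; exact hbound m y hyR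
  have hval : (∑' m, g' m y) = SS (fun m => ε (m + 1)) (k + 1) y / 4 := by
    rw [Summable.tsum_eq_zero_add hsum']
    have h0 : g' 0 y = 0 := by simp [hg']
    rw [h0, zero_add]
    have hterm : ∀ n : ℕ, g' (n+1) y
        = (ε (n+1) * y ^ n / (4 ^ n * n.factorial * (n + (k+1)).factorial)) / 4 := by
      intro n
      have e1 : n + 1 - 1 = n := by omega
      have e2 : n + 1 + k = n + (k + 1) := by omega
      simp only [hg', e1, e2, Nat.factorial_succ]
      have h4 : ((4:ℝ) ^ (n+1)) = 4 * 4 ^ n := by ring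
      rw [h4]
      push_cast
      have hne1 : ((n:ℝ) + 1) ≠ 0 := by positivity
      have hne2 : ((4:ℝ) ^ n) ≠ 0 := by positivity
      have hne3 : ((n.factorial : ℝ)) ≠ 0 := by positivity
      have hne4 : (((n + (k+1)).factorial : ℝ)) ≠ 0 := by positivity
      field_simp
    rw [tsum_congr hterm, tsum_div_const]
    rfl
  rw [← hval]
  exact key

lemma SS_continuous (ε : ℕ → ℝ) (hε : ∀ m, |ε m| ≤ 1) (k : ℕ) : Continuous (SS ε k) := by
  rw [continuous_iff_continuousAt]
  exact fun y => (SS_hasDerivAt ε hε k y).differentiableAt.continuousAt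

noncomputable def Sb (k : ℕ) : ℝ → ℝ := SS (fun m => (-1) ^ m) k
noncomputable def Tb (k : ℕ) : ℝ → ℝ := SS (fun _ => 1) k

lemma hεS : ∀ m : ℕ, |((-1:ℝ)) ^ m| ≤ 1 := by
  intro m; rw [abs_pow, abs_neg, abs_one, one_pow]

lemma hεT : ∀ m : ℕ, |(1:ℝ)| ≤ 1 := by intro m; simp

lemma Sb_summable (k : ℕ) (y : ℝ) :
    Summable (fun m : ℕ => (-1:ℝ) ^ m * y ^ m / (4 ^ m * m.factorial * (m + k).factorial)) :=
  SS_summable _ hεS k y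

lemma Sb_hasDerivAt (k : ℕ) (y : ℝ) :
    HasDerivAt (Sb k) (-(Sb (k+1) y) / 4) y := by
  have h := SS_hasDerivAt (fun m => (-1:ℝ) ^ m) hεS k y
  have hval : SS (fun m => (-1:ℝ) ^ (m + 1)) (k + 1) y = -(Sb (k+1) y) := by
    unfold Sb SS
    rw [← tsum_neg]
    congr 1; funext m
    simp only [pow_succ]
    ring
  rw [hval] at h
  exact h
lemma Sb_continuous (k : ℕ) : Continuous (Sb k) := SS_continuous _ hεS k
lemma Tb_continuous (k : ℕ) : Continuous (Tb k) := SS_continuous _ hεT k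

lemma Tb_pos (k : ℕ) {y : ℝ} (hy : 0 ≤ y) : 0 < Tb k y := by
  unfold Tb SS
  apply Summable.tsum_pos (SS_summable _ hεT k y) _ 0
  · simp only [pow_zero, Nat.factorial_zero, zero_add]
    positivity
  · intro m
    positivity

lemma Sb_zero (k : ℕ) : Sb k 0 = 1 / k.factorial := by
  unfold Sb SS
  rw [tsum_eq_single 0]
  · simp
  · intro m hm
    simp [zero_pow hm]

lemma Sb_rec (k : ℕ) (y : ℝ) :
    Sb k y = (k + 1) * Sb (k+1) y - y / 4 * Sb (k+2) y := by
  have h1 : Summable (fun m : ℕ =>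
      (-1:ℝ) ^ m * y ^ m / (4 ^ m * m.factorial * (m + k).factorial)) := Sb_summable k y
  have h2 : Summable (fun m : ℕ =>
      ((k:ℝ)+1) * ((-1:ℝ) ^ m * y ^ m / (4 ^ m * m.factorial * (m + (k+1)).factorial))) :=
    (Sb_summable (k+1) y).mul_left _
  have key : Sb k y - (k+1) * Sb (k+1) y = - (y/4) * Sb (k+2) y := by
    have e1 : Sb k y - (k+1) * Sb (k+1) y
        = ∑' m : ℕ, ((-1:ℝ) ^ m * y ^ m / (4 ^ m * m.factorial * (m + k).factorial)
          - ((k:ℝ)+1) * ((-1:ℝ) ^ m * y ^ m / (4 ^ m * m.factorial * (m + (k+1)).factorial))) := by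
      rw [Summable.tsum_sub h1 h2]
      unfold Sb SS
      rw [tsum_mul_left]
    set D : ℕ → ℝ := fun m =>
      (-1:ℝ) ^ m * y ^ m * m / (4 ^ m * m.factorial * (m + (k+1)).factorial) with hD
    have hterm : ∀ m : ℕ,
        ((-1:ℝ) ^ m * y ^ m / (4 ^ m * m.factorial * (m + k).factorial)
          - ((k:ℝ)+1) * ((-1:ℝ) ^ m * y ^ m / (4 ^ m * m.factorial * (m + (k+1)).factorial)))
        = D m := by
      intro m
      have e2 : m + (k + 1) = (m + k) + 1 := by omega
      simp only [hD, e2, Nat.factorial_succ]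
      push_cast
      have hne1 : ((m:ℝ) + k + 1) ≠ 0 := by positivity
      have hne2 : ((4:ℝ) ^ m) ≠ 0 := by positivity
      have hne3 : ((m.factorial : ℝ)) ≠ 0 := by positivity
      have hne4 : (((m + k).factorial : ℝ)) ≠ 0 := by positivity
      field_simp
      ring
    have hDsum : Summable D := by
      apply Summable.of_norm_bounded ((summable_deriv_bound (|y|+1)).mul_left (|y|+1))
      intro m
      have hC := Cpos m (k+1)
      rw [hD, Real.norm_eq_abs, abs_div, abs_of_pos hC, abs_mul, abs_mul, abs_pow, abs_pow,
        abs_neg, abs_one, one_pow, one_mul, abs_of_nonneg (Nat.cast_nonneg m : (0:ℝ) ≤ m)]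
      rcases Nat.eq_zero_or_pos m with hm | hm
      · subst hm; simp
      · have hym : |y| ^ m ≤ (|y|+1) * (|y|+1) ^ (m-1) := by
          calc |y| ^ m ≤ (|y|+1) ^ m := by gcongr; linarith [abs_nonneg y]
            _ = (|y|+1) * (|y|+1) ^ (m-1) := by
                rw [← pow_succ']
                congr 1
                omega
        calc |y| ^ m * m / (4 ^ m * m.factorial * (m + (k+1)).factorial)
            ≤ |y| ^ m * m / m.factorial := by
              gcongr
              exact Cge m (k+1)
          _ ≤ ((|y|+1) * (|y|+1) ^ (m-1)) * m / m.factorial := by gcongr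
          _ = (|y|+1) * ((m:ℝ) * (|y|+1) ^ (m-1) / m.factorial) := by ring
    rw [e1, tsum_congr hterm, Summable.tsum_eq_zero_add hDsum]
    have h0 : D 0 = 0 := by simp [hD]
    rw [h0, zero_add]
    have hterm2 : ∀ n : ℕ, D (n+1) = (-(y/4)) * ((-1:ℝ) ^ n * y ^ n / (4 ^ n * n.factorial * (n + (k+2)).factorial)) := by
      intro n
      have e3 : n + 1 + (k+1) = n + (k + 2) := by omega
      simp only [hD, e3, Nat.factorial_succ, pow_succ]
      push_cast
      have hne1 : ((n:ℝ) + 1) ≠ 0 := by positivity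
      have hne2 : ((4:ℝ) ^ n) ≠ 0 := by positivity
      have hne3 : ((n.factorial : ℝ)) ≠ 0 := by positivity
      have hne4 : (((n + (k+2)).factorial : ℝ)) ≠ 0 := by positivity
      field_simp
    rw [tsum_congr hterm2, tsum_mul_left]
    unfold Sb SS
    ring
  linarith [key]
noncomputable def fJ (k : ℕ) (z : ℝ) : ℝ := (z/2) ^ k * Sb k (z^2)
noncomputable def fI (k : ℕ) (z : ℝ) : ℝ := (z/2) ^ k * Tb k (z^2)

lemma term_eq (k m : ℕ) (z : ℝ) (s : ℝ) :
    s * (z / 2) ^ (2 * (m : ℝ) + (k:ℝ)) / ((m.factorial : ℝ) * Real.Gamma ((m : ℝ) + (k:ℝ) + 1))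
    = (z/2) ^ k * (s * (z^2) ^ m / (4 ^ m * m.factorial * (m + k).factorial)) := by
  have hΓ : Real.Gamma ((m : ℝ) + (k:ℝ) + 1) = ((m + k).factorial : ℝ) := by
    rw [show ((m : ℝ) + (k:ℝ) + 1) = (((m + k : ℕ)) : ℝ) + 1 by push_cast; ring,
      Real.Gamma_nat_eq_factorial]
  have hrpow : (z / 2) ^ (2 * (m : ℝ) + (k:ℝ)) = (z/2) ^ (2 * m + k) := by
    rw [show (2 * (m : ℝ) + (k:ℝ)) = (((2 * m + k : ℕ)) : ℝ) by push_cast; ring,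
      Real.rpow_natCast]
  rw [hΓ, hrpow, pow_add, pow_mul]
  have h1 : ((z/2) ^ 2) ^ m = (z^2) ^ m / 4 ^ m := by
    rw [← pow_mul, div_pow, pow_mul, pow_mul]; norm_num
  rw [h1]
  have hne2 : ((4:ℝ) ^ m) ≠ 0 := by positivity
  have hne3 : ((m.factorial : ℝ)) ≠ 0 := by positivity
  have hne4 : (((m + k).factorial : ℝ)) ≠ 0 := by positivity
  field_simp

lemma besselJ_eq (k : ℕ) (z : ℝ) : besselJ k z = fJ k z := by
  unfold besselJ fJ Sb SS
  rw [← tsum_mul_left]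
  apply tsum_congr
  intro m
  exact term_eq k m z ((-1:ℝ)^m)

lemma besselI_eq (k : ℕ) (z : ℝ) : besselI k z = fI k z := by
  unfold besselI fI Tb SS
  rw [← tsum_mul_left]
  apply tsum_congr
  intro m
  have := term_eq k m z 1
  rw [one_mul] at this
  rw [this]

lemma fJ_continuous (k : ℕ) : Continuous (fJ k) := by
  apply Continuous.mul
  · exact (continuous_id.div_const 2).pow k
  · exact (Sb_continuous k).comp (continuous_pow 2)

lemma fI_continuous (k : ℕ) : Continuous (fI k) := by
  apply Continuous.mul
  · exact (continuous_id.div_const 2).pow k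
  · exact (Tb_continuous k).comp (continuous_pow 2)

lemma fI_pos (k : ℕ) {z : ℝ} (hz : 0 < z) : 0 < fI k z := by
  unfold fI
  have := Tb_pos k (sq_nonneg z)
  positivity

lemma fJ_hasDerivAt (k : ℕ) {z : ℝ} (hz : 0 < z) :
    HasDerivAt (fJ k) ((k/z) * fJ k z - fJ (k+1) z) z := by
  have h1 : HasDerivAt (fun w : ℝ => (w/2) ^ k) ((k:ℝ) * (z/2) ^ (k-1) * (2:ℝ)⁻¹) z := by
    have := (hasDerivAt_pow k (z/2)).comp z ((hasDerivAt_id z).div_const 2)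
    simpa [Function.comp_def] using this
  have h2 : HasDerivAt (fun w : ℝ => Sb k (w^2)) ((-(Sb (k+1) (z^2)) / 4) * (2 * z)) z := by
    have := (Sb_hasDerivAt k (z^2)).comp z (hasDerivAt_pow 2 z)
    simpa [Function.comp_def] using this
  have h := h1.mul h2
  refine h.congr_deriv (Eq.symm ?_)
  unfold fJ
  have hzne : z ≠ 0 := hz.ne'
  cases k with
  | zero =>
    simp only [pow_zero, Nat.cast_zero, pow_one, Nat.zero_sub]
    field_simp
    ring
  | succ n =>
    simp only [Nat.succ_sub_one, pow_succ]
    push_cast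
    field_simp
    ring
lemma fJ_rec (k : ℕ) {z : ℝ} (hz : 0 < z) :
    fJ k z = 2 * (k+1) / z * fJ (k+1) z - fJ (k+2) z := by
  unfold fJ
  rw [Sb_rec k (z^2)]
  have hzne : z ≠ 0 := hz.ne'
  simp only [pow_succ]
  field_simp
  ring

lemma hasDerivAt_G (k : ℕ) {z : ℝ} (hz : 0 < z) :
    HasDerivAt (fun w => w ^ (k+1) * fJ (k+1) w) (z ^ (k+1) * fJ k z) z := by
  have h := (hasDerivAt_pow (k+1) z).mul (fJ_hasDerivAt (k+1) hz)
  refine h.congr_deriv (Eq.symm ?_)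
  rw [fJ_rec k hz]
  have hzne : z ≠ 0 := hz.ne'
  simp only [Nat.add_sub_cancel, pow_succ]
  push_cast
  field_simp
  ring

lemma hasDerivAt_H (k : ℕ) {z : ℝ} (hz : 0 < z) :
    HasDerivAt (fun w => fJ k w / w ^ k) (-fJ (k+1) z / z ^ k) z := by
  have hzne : z ≠ 0 := hz.ne'
  have h := (fJ_hasDerivAt k hz).div (hasDerivAt_pow k z) (pow_ne_zero k hzne)
  refine h.congr_deriv (Eq.symm ?_)
  cases k with
  | zero => simp
  | succ n =>
    simp only [Nat.succ_sub_one, pow_succ]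
    push_cast
    field_simp
    ring
lemma no_zero_mul_pos {g : ℝ → ℝ} (hc : Continuous g) {p q : ℝ} (hpq : p ≤ q)
    (hnz : ∀ x ∈ Set.Icc p q, g x ≠ 0) : 0 < g p * g q := by
  rcases lt_trichotomy (g p * g q) 0 with h | h | h
  · exfalso
    rcases mul_neg_iff.mp h with ⟨hp, hq⟩ | ⟨hp, hq⟩
    · obtain ⟨c, hc1, hc2⟩ := intermediate_value_Icc' hpq hc.continuousOn
        (⟨hq.le, hp.le⟩ : (0:ℝ) ∈ Set.Icc (g q) (g p))
      exact hnz c hc1 hc2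
    · obtain ⟨c, hc1, hc2⟩ := intermediate_value_Icc hpq hc.continuousOn
        (⟨hp.le, hq.le⟩ : (0:ℝ) ∈ Set.Icc (g p) (g q))
      exact hnz c hc1 hc2
  · exfalso
    rcases mul_eq_zero.mp h with h' | h'
    · exact hnz p (Set.left_mem_Icc.mpr hpq) h'
    · exact hnz q (Set.right_mem_Icc.mpr hpq) h'
  · exact h

lemma fJ_pos_of_no_zero (m : ℕ) {b : ℝ} (hb : 0 < b)
    (hnz : ∀ x, 0 < x → x < b → fJ m x ≠ 0) :
    ∀ x, 0 < x → x < b → 0 < fJ m x := by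
  intro x hx hxb
  -- find small w with fJ m w > 0
  have hS0 : 0 < Sb m 0 := by
    rw [Sb_zero]
    positivity
  have hcontS : ContinuousAt (Sb m) 0 := (Sb_continuous m).continuousAt
  have hev : ∀ᶠ y in nhds (0:ℝ), Sb m y ∈ Set.Ioi 0 :=
    hcontS (Ioi_mem_nhds hS0)
  obtain ⟨δ, hδ, hball⟩ := Metric.eventually_nhds_iff.mp hev
  set w : ℝ := min x (min 1 δ) / 2 with hw
  have hwpos : 0 < w := by
    apply div_pos _ (by norm_num)
    exact lt_min hx (lt_min one_pos hδ)
  have hwx : w < x := by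
    have : w ≤ x / 2 := by
      apply div_le_div_of_nonneg_right _ (by norm_num)
      · exact min_le_left _ _
    linarith
  have hw1 : w ≤ 1/2 := by
    have h1 : min x (min 1 δ) ≤ 1 := le_trans (min_le_right _ _) (min_le_left _ _)
    rw [hw]; linarith
  have hwδ : w ≤ δ/2 := by
    have h1 : min x (min 1 δ) ≤ δ := le_trans (min_le_right _ _) (min_le_right _ _)
    rw [hw]; linarith
  have hSw : 0 < Sb m (w^2) := by
    apply hball
    rw [Real.dist_eq, sub_zero, abs_of_nonneg (sq_nonneg w)]
    nlinarith
  have hfw : 0 < fJ m w := by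
    unfold fJ
    positivity
  -- now IVT
  rcases lt_trichotomy (fJ m x) 0 with h | h | h
  · exfalso
    obtain ⟨c, hc1, hc2⟩ := intermediate_value_Icc' hwx.le (fJ_continuous m).continuousOn
      (⟨h.le, hfw.le⟩ : (0:ℝ) ∈ Set.Icc (fJ m x) (fJ m w))
    exact hnz c (lt_of_lt_of_le hwpos hc1.1) (lt_of_le_of_lt hc1.2 hxb) hc2
  · exact absurd h (hnz x hx hxb)
  · exact h

lemma inv_tendsto_atBot_neg :
    Filter.Tendsto (fun y : ℝ => y⁻¹) (nhdsWithin 0 (Set.Iio 0)) Filter.atBot := by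
  have h1 : Filter.Tendsto (fun y : ℝ => -y) (nhdsWithin 0 (Set.Iio 0))
      (nhdsWithin 0 (Set.Ioi 0)) := by
    rw [tendsto_nhdsWithin_iff]
    constructor
    · have h0 : Filter.Tendsto (fun y : ℝ => -y) (nhds 0) (nhds (-0)) :=
        continuous_neg.tendsto (0:ℝ)
      rw [neg_zero] at h0
      exact h0.mono_left nhdsWithin_le_nhds
    · filter_upwards [eventually_mem_nhdsWithin] with y hy
      simpa using hy
  have h2 := tendsto_inv_nhdsGT_zero.comp h1
  have h3 := Filter.tendsto_neg_atTop_atBot.comp h2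
  convert h3 using 1
  funext y
  rw [Function.comp_apply, Function.comp_apply, inv_neg, neg_neg]

/-- Here `j k ℓ` (zero-based in `ℓ`) enumerates the positive zeros of `J_k` in increasing
order.  For each `ℓ`, `F̃_k(α) → −∞` as `α → j_{k,ℓ}⁺`, `F̃_k(j_{k+1,ℓ}) > 0`, and hence
`F̃_k` has a root in `(j_{k,ℓ}, j_{k+1,ℓ})`. -/
theorem stmt9 (κ : ℝ) (hκ : 0 < κ) (k : ℕ) (j : ℕ → ℕ → ℝ)
    (hmono : ∀ m, StrictMono (j m)) (hpos : ∀ m l, 0 < j m l)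
    (hzero : ∀ (m l : ℕ), besselJ m (j m l) = 0)
    (hall : ∀ (m : ℕ) (x : ℝ), 0 < x → besselJ m x = 0 → ∃ l, j m l = x) :
    ∀ l : ℕ,
      Filter.Tendsto (Ftilde κ k) (nhdsWithin (j k l) (Set.Ioi (j k l))) Filter.atBot ∧
      0 < Ftilde κ k (j (k + 1) l) ∧
      ∃ α ∈ Set.Ioo (j k l) (j (k + 1) l), Ftilde κ k α = 0 := by
  have fzero : ∀ m i, fJ m (j m i) = 0 := by
    intro m i; rw [← besselJ_eq]; exact hzero m i
  have fall : ∀ (m : ℕ) (x : ℝ), 0 < x → fJ m x = 0 → ∃ i, j m i = x := by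
    intro m x hx h
    apply hall m x hx
    rw [besselJ_eq]; exact h
  have nz_between : ∀ m i (x : ℝ), j m i < x → x < j m (i+1) → fJ m x ≠ 0 := by
    intro m i x h1 h2 hx
    obtain ⟨n, hn⟩ := fall m x (lt_trans (hpos m i) h1) hx
    rw [← hn] at h1 h2
    have e1 := (hmono m).lt_iff_lt.mp h1
    have e2 := (hmono m).lt_iff_lt.mp h2
    omega
  have nz_before : ∀ m (x : ℝ), 0 < x → x < j m 0 → fJ m x ≠ 0 := by
    intro m x hx hxb hfx
    obtain ⟨n, hn⟩ := fall m x hx hfx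
    have h := (hmono m).monotone (Nat.zero_le n)
    rw [hn] at h; linarith
  have posb : ∀ (m : ℕ) (x : ℝ), 0 < x → x < j m 0 → 0 < fJ m x := fun m =>
    fJ_pos_of_no_zero m (hpos m 0) (nz_before m)
  have rolle1 : ∀ (m : ℕ) (p q : ℝ), 0 < p → p < q → fJ m p = 0 → fJ m q = 0 →
      ∃ c, c ∈ Set.Ioo p q ∧ fJ (m+1) c = 0 := by
    intro m p q hp hpq h1 h2
    have hcont : ContinuousOn (fun w => fJ m w / w ^ m) (Set.Icc p q) := by
      apply (fJ_continuous m).continuousOn.div (continuous_pow m).continuousOn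
      intro x hx
      exact pow_ne_zero m (lt_of_lt_of_le hp hx.1).ne'
    have heq : fJ m p / p ^ m = fJ m q / q ^ m := by rw [h1, h2]; simp
    obtain ⟨c, hc, hc0⟩ := exists_hasDerivAt_eq_zero hpq hcont heq
      (fun x hx => hasDerivAt_H m (lt_trans hp hx.1))
    have hcpos : 0 < c := lt_trans hp hc.1
    refine ⟨c, hc, ?_⟩
    have := (div_eq_zero_iff.mp hc0).resolve_right (pow_ne_zero _ hcpos.ne')
    linarith [neg_eq_zero.mp this]
  have rolle2 : ∀ (m : ℕ) (p q : ℝ), 0 < p → p < q → fJ (m+1) p = 0 → fJ (m+1) q = 0 →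
      ∃ c, c ∈ Set.Ioo p q ∧ fJ m c = 0 := by
    intro m p q hp hpq h1 h2
    have hcont : ContinuousOn (fun w => w ^ (m+1) * fJ (m+1) w) (Set.Icc p q) :=
      ((continuous_pow (m+1)).mul (fJ_continuous (m+1))).continuousOn
    have heq : p ^ (m+1) * fJ (m+1) p = q ^ (m+1) * fJ (m+1) q := by rw [h1, h2]; ring
    obtain ⟨c, hc, hc0⟩ := exists_hasDerivAt_eq_zero hpq hcont heq
      (fun x hx => hasDerivAt_G m (lt_trans hp hx.1))
    have hcpos : 0 < c := lt_trans hp hc.1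
    exact ⟨c, hc, (mul_eq_zero.mp hc0).resolve_left (pow_ne_zero _ hcpos.ne')⟩
  have base : ∀ m : ℕ, j m 0 < j (m+1) 0 := by
    intro m
    by_contra hcon
    push_neg at hcon
    have hb : 0 < j (m+1) 0 := hpos (m+1) 0
    have hmonoG : StrictMonoOn (fun w => w ^ (m+1) * fJ (m+1) w) (Set.Icc 0 (j (m+1) 0)) := by
      refine strictMonoOn_of_hasDerivWithinAt_pos (f' := fun x => x ^ (m+1) * fJ m x)
        (convex_Icc 0 (j (m+1) 0))
        ((continuous_pow (m+1)).mul (fJ_continuous (m+1))).continuousOn ?_ ?_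
      · intro x hx
        rw [interior_Icc] at hx
        exact (hasDerivAt_G m hx.1).hasDerivWithinAt
      · intro x hx
        rw [interior_Icc] at hx
        have hfx : 0 < fJ m x := posb m x hx.1 (lt_of_lt_of_le hx.2 hcon)
        have hx1 : 0 < x := hx.1
        positivity
    have h0 := hmonoG (Set.left_mem_Icc.mpr hb.le) (Set.right_mem_Icc.mpr hb.le) hb
    simp only [fzero (m+1) 0, mul_zero] at h0
    have : (0:ℝ) ^ (m+1) * fJ (m+1) 0 = 0 := by
      rw [zero_pow (Nat.succ_ne_zero m), zero_mul]
    rw [this] at h0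
    exact lt_irrefl 0 h0
  have interlace : ∀ (m i : ℕ), j m i < j (m+1) i ∧ j (m+1) i < j m (i+1) := by
    intro m i
    induction i with
    | zero =>
      refine ⟨base m, ?_⟩
      obtain ⟨c, hc, hc0⟩ := rolle1 m (j m 0) (j m 1) (hpos m 0)
        ((hmono m) Nat.zero_lt_one) (fzero m 0) (fzero m 1)
      obtain ⟨n, hn⟩ := fall (m+1) c (lt_trans (hpos m 0) hc.1) hc0
      have h1 := (hmono (m+1)).monotone (Nat.zero_le n)
      rw [hn] at h1
      exact lt_of_le_of_lt h1 hc.2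
    | succ n ih =>
      obtain ⟨ih1, ih2⟩ := ih
      constructor
      · obtain ⟨c, hc, hc0⟩ := rolle2 m (j (m+1) n) (j (m+1) (n+1)) (hpos (m+1) n)
          ((hmono (m+1)) (by omega)) (fzero (m+1) n) (fzero (m+1) (n+1))
        obtain ⟨i', hi'⟩ := fall m c (lt_trans (hpos (m+1) n) hc.1) hc0
        have hgt : j m n < j m i' := by rw [hi']; exact lt_trans ih1 hc.1
        have hni : n < i' := (hmono m).lt_iff_lt.mp hgt
        have hle : j m (n+1) ≤ j m i' := (hmono m).monotone (by omega)
        rw [hi'] at hle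
        exact lt_of_le_of_lt hle hc.2
      · obtain ⟨c, hc, hc0⟩ := rolle1 m (j m (n+1)) (j m (n+2)) (hpos m (n+1))
          ((hmono m) (by omega)) (fzero m (n+1)) (fzero m (n+2))
        obtain ⟨i', hi'⟩ := fall (m+1) c (lt_trans (hpos m (n+1)) hc.1) hc0
        have hgt : j (m+1) n < j (m+1) i' := by rw [hi']; exact lt_trans ih2 hc.1
        have hni : n < i' := (hmono (m+1)).lt_iff_lt.mp hgt
        have hle : j (m+1) (n+1) ≤ j (m+1) i' := (hmono (m+1)).monotone (by omega)
        rw [hi'] at hle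
        exact lt_of_le_of_lt hle hc.2
  -- casts
  have hcast : ((k:ℝ) + 1) = ((k+1 : ℕ) : ℝ) := by push_cast; ring
  have hFeq : ∀ x : ℝ, 0 < x → Ftilde κ k x
      = (κ/x) * fI (k+1) (κ/x) / fI k (κ/x) + x * fJ (k+1) x / fJ k x := by
    intro x hx
    unfold Ftilde
    rw [hcast, besselI_eq (k+1), besselI_eq k, besselJ_eq (k+1), besselJ_eq k]
  intro l
  set a := j k l with ha_def
  set b := j (k+1) l with hb_def
  have ha : 0 < a := hpos k l
  have hb : 0 < b := hpos (k+1) l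
  have hab : a < b := (interlace k l).1
  have hba' : b < j k (l+1) := (interlace k l).2
  have NZk : ∀ x, a < x → x ≤ b → fJ k x ≠ 0 := fun x h1 h2 =>
    nz_between k l x h1 (lt_of_le_of_lt h2 hba')
  have NZk1 : ∀ x, a ≤ x → x < b → fJ (k+1) x ≠ 0 := by
    intro x hx1 hx2 hfx
    obtain ⟨i, hi⟩ := fall (k+1) x (lt_of_lt_of_le ha hx1) hfx
    have hilt : i < l := (hmono (k+1)).lt_iff_lt.mp (by rw [hi]; exact hx2)
    have h3 : j (k+1) i < j k (i+1) := (interlace k i).2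
    have h4 : j k (i+1) ≤ j k l := (hmono k).monotone (by omega)
    rw [hi] at h3
    have : a ≤ j (k+1) i := by rw [hi]; exact hx1
    linarith
  have hc1ne : fJ (k+1) a ≠ 0 := NZk1 a le_rfl hab
  have samesign : ∀ x, a ≤ x → x < b → 0 < fJ (k+1) a * fJ (k+1) x := by
    intro x h1 h2
    exact no_zero_mul_pos (fJ_continuous (k+1)) h1
      (fun t ht => NZk1 t ht.1 (lt_of_le_of_lt ht.2 h2))
  have hfa : fJ k a = 0 := fzero k l
  have keysign : ∀ x, a < x → x < b → fJ k x * fJ (k+1) a < 0 := by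
    intro x hx1 hx2
    have hcont : ContinuousOn (fun w => fJ k w / w ^ k) (Set.Icc a x) := by
      apply (fJ_continuous k).continuousOn.div (continuous_pow k).continuousOn
      intro t ht
      exact pow_ne_zero k (lt_of_lt_of_le ha ht.1).ne'
    obtain ⟨c, hc, hc0⟩ := exists_hasDerivAt_eq_slope (fun w => fJ k w / w ^ k)
      (fun w => -fJ (k+1) w / w ^ k) hx1 hcont
      (fun t ht => hasDerivAt_H k (lt_trans ha ht.1))
    rw [hfa, zero_div, sub_zero] at hc0
    have hcpos : 0 < c := lt_trans ha hc.1
    have hxpos : 0 < x := lt_trans ha hx1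
    have hsame : 0 < fJ (k+1) a * fJ (k+1) c := samesign c hc.1.le (lt_trans hc.2 hx2)
    have hxk : 0 < x ^ k := pow_pos hxpos k
    have hck : 0 < c ^ k := pow_pos hcpos k
    have hxa : 0 < x - a := by linarith
    have heq : -fJ (k+1) c * (x ^ k * (x - a)) = fJ k x * c ^ k := by
      field_simp at hc0
      linarith
    have h6 : fJ k x * c ^ k * fJ (k+1) a < 0 := by
      have h5 : fJ k x * c ^ k * fJ (k+1) a
          = -((x ^ k * (x - a)) * (fJ (k+1) a * fJ (k+1) c)) := by
        rw [← heq]; ring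
      rw [h5]
      exact neg_lt_zero.mpr (mul_pos (mul_pos hxk hxa) hsame)
    have h8 : fJ k x * fJ (k+1) a = fJ k x * c ^ k * fJ (k+1) a / c ^ k := by
      field_simp
    rw [h8]
    exact div_neg_of_neg_of_pos h6 hck
  -- limit of the J-term
  have htfJ : Filter.Tendsto (fJ k) (nhdsWithin a (Set.Ioi a)) (nhds 0) := by
    have h := ((fJ_continuous k).tendsto a).mono_left
      (nhdsWithin_le_nhds (s := Set.Ioi a))
    rw [hfa] at h
    exact h
  have hnum : Filter.Tendsto (fun x => x * fJ (k+1) x) (nhdsWithin a (Set.Ioi a))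
      (nhds (a * fJ (k+1) a)) :=
    ((continuous_id.mul (fJ_continuous (k+1))).tendsto a).mono_left nhdsWithin_le_nhds
  have hIoo : Set.Ioo a b ∈ nhdsWithin a (Set.Ioi a) :=
    Ioo_mem_nhdsGT_of_mem ⟨le_refl a, hab⟩
  have hterm2 : Filter.Tendsto (fun x => x * fJ (k+1) x / fJ k x)
      (nhdsWithin a (Set.Ioi a)) Filter.atBot := by
    have hmuleq : (fun x => x * fJ (k+1) x / fJ k x)
        = fun x => (x * fJ (k+1) x) * (fJ k x)⁻¹ := by
      funext x; rw [div_eq_mul_inv]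
    rw [hmuleq]
    rcases hc1ne.lt_or_gt with hc1neg | hc1pos
    · -- fJ (k+1) a < 0, so fJ k > 0 on Ioo a b
      have hevpos : ∀ᶠ x in nhdsWithin a (Set.Ioi a), fJ k x ∈ Set.Ioi 0 := by
        filter_upwards [hIoo] with x hx
        have hks := keysign x hx.1 hx.2
        have : 0 < fJ k x := by nlinarith
        exact this
      have hden : Filter.Tendsto (fJ k) (nhdsWithin a (Set.Ioi a))
          (nhdsWithin 0 (Set.Ioi 0)) := tendsto_nhdsWithin_iff.mpr ⟨htfJ, hevpos⟩
      have hinv : Filter.Tendsto (fun x => (fJ k x)⁻¹) (nhdsWithin a (Set.Ioi a))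
          Filter.atTop := tendsto_inv_nhdsGT_zero.comp hden
      exact Filter.Tendsto.neg_mul_atTop (mul_neg_of_pos_of_neg ha hc1neg) hnum hinv
    · -- fJ (k+1) a > 0, so fJ k < 0 on Ioo a b
      have hevneg : ∀ᶠ x in nhdsWithin a (Set.Ioi a), fJ k x ∈ Set.Iio 0 := by
        filter_upwards [hIoo] with x hx
        have hks := keysign x hx.1 hx.2
        have : fJ k x < 0 := by nlinarith
        exact this
      have hden : Filter.Tendsto (fJ k) (nhdsWithin a (Set.Ioi a))
          (nhdsWithin 0 (Set.Iio 0)) := tendsto_nhdsWithin_iff.mpr ⟨htfJ, hevneg⟩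
      have hinv : Filter.Tendsto (fun x => (fJ k x)⁻¹) (nhdsWithin a (Set.Ioi a))
          Filter.atBot := inv_tendsto_atBot_neg.comp hden
      exact Filter.Tendsto.pos_mul_atBot (mul_pos ha hc1pos) hnum hinv
  -- the I-term
  have hterm1 : Filter.Tendsto (fun x => (κ/x) * fI (k+1) (κ/x) / fI k (κ/x))
      (nhdsWithin a (Set.Ioi a)) (nhds ((κ/a) * fI (k+1) (κ/a) / fI k (κ/a))) := by
    have hk0 : ContinuousAt (fun x : ℝ => κ / x) a :=
      continuousAt_const.div continuousAt_id ha.ne'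
    have hIne : fI k (κ / a) ≠ 0 := (fI_pos k (div_pos hκ ha)).ne'
    exact ((hk0.mul ((fI_continuous (k+1)).continuousAt.comp hk0)).div
      ((fI_continuous k).continuousAt.comp hk0) hIne).tendsto.mono_left nhdsWithin_le_nhds
  have final1 : Filter.Tendsto (Ftilde κ k) (nhdsWithin a (Set.Ioi a)) Filter.atBot := by
    have hsum := hterm1.add_atBot hterm2
    apply hsum.congr'
    filter_upwards [eventually_mem_nhdsWithin] with x hx
    exact (hFeq x (lt_trans ha hx)).symm
  -- part 2
  have part2 : 0 < Ftilde κ k b := by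
    have hJb : besselJ ((k:ℝ) + 1) b = 0 := by
      rw [hcast]; exact hzero (k+1) l
    unfold Ftilde
    rw [hJb, mul_zero, zero_div, add_zero, hcast, besselI_eq (k+1), besselI_eq k]
    have hkb : 0 < κ / b := div_pos hκ hb
    have h1 := fI_pos (k+1) hkb
    have h2 := fI_pos k hkb
    positivity
  refine ⟨final1, part2, ?_⟩
  -- part 3: IVT
  obtain ⟨p, hFp, hpIoo⟩ :=
    ((final1.eventually (eventually_lt_atBot 0)).and hIoo).exists
  have hap : a < p := hpIoo.1
  have hpb : p < b := hpIoo.2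
  have hcontF : ContinuousOn (Ftilde κ k) (Set.Icc p b) := by
    have hposx : ∀ x ∈ Set.Icc p b, 0 < x := fun x hx => lt_trans ha (lt_of_lt_of_le hap hx.1)
    have hxne : ∀ x ∈ Set.Icc p b, x ≠ 0 := fun x hx => (hposx x hx).ne'
    have hg1 : ContinuousOn (fun x : ℝ => κ / x) (Set.Icc p b) :=
      continuousOn_const.div continuousOn_id hxne
    have hclosed : ContinuousOn
        (fun x => (κ/x) * fI (k+1) (κ/x) / fI k (κ/x) + x * fJ (k+1) x / fJ k x)
        (Set.Icc p b) := by
      apply ContinuousOn.add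
      · apply ContinuousOn.div
        · exact hg1.mul ((fI_continuous (k+1)).comp_continuousOn hg1)
        · exact (fI_continuous k).comp_continuousOn hg1
        · intro x hx
          exact (fI_pos k (div_pos hκ (hposx x hx))).ne'
      · apply ContinuousOn.div
        · exact continuousOn_id.mul (fJ_continuous (k+1)).continuousOn
        · exact (fJ_continuous k).continuousOn
        · intro x hx
          exact NZk x (lt_of_lt_of_le hap hx.1) hx.2
    apply hclosed.congr
    intro x hx
    exact hFeq x (hposx x hx)
  have h0mem : (0:ℝ) ∈ Set.Ioo (Ftilde κ k p) (Ftilde κ k b) := ⟨hFp, part2⟩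
  obtain ⟨α, hα, hα0⟩ := intermediate_value_Ioo hpb.le hcontF h0mem
  exact ⟨α, ⟨lt_trans hap hα.1, hα.2⟩, hα0⟩
end

section
/- Let a > 0 and f : [0,1] → ℝ continuous with f(r) < 0 for all r ∈ (0,1). Suppose v ∈ C²((0,1)) ∩ C([0,1]) satisfies −(r·v'(r))' + r·(1/r² + a²)·v(r) = r·f(r) on (0,1) with v(0) = 0 and v(1) = 0. Then v(r) < 0 for all r ∈ (0,1). -/
open Real Filter Set

private lemma no_nonneg_max (a : ℝ) (ha : 0 < a) (f v : ℝ → ℝ)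
    (hfneg : ∀ r ∈ Set.Ioo (0 : ℝ) 1, f r < 0)
    (hv2 : ContDiffOn ℝ 2 v (Set.Ioo 0 1))
    (heq : ∀ r ∈ Set.Ioo (0 : ℝ) 1,
      -(deriv (fun s : ℝ => s * deriv v s) r) + r * (1 / r ^ 2 + a ^ 2) * v r = r * f r)
    (c : ℝ) (hc : c ∈ Set.Ioo (0 : ℝ) 1) (hmax : IsLocalMax v c) (hvc : 0 ≤ v c) : False := by
  have hd1 : ContDiffOn ℝ 1 (deriv v) (Set.Ioo 0 1) :=
    hv2.deriv_of_isOpen isOpen_Ioo (by norm_num)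
  have hgcont : ContinuousOn (deriv v) (Set.Ioo 0 1) := hd1.continuousOn
  have hwcont : ContinuousOn (deriv (deriv v)) (Set.Ioo 0 1) :=
    hd1.continuousOn_deriv_of_isOpen isOpen_Ioo le_rfl
  have hgdiff : DifferentiableAt ℝ (deriv v) c :=
    ((hd1.differentiableOn one_ne_zero) c hc).differentiableAt (isOpen_Ioo.mem_nhds hc)
  have hg0 : deriv v c = 0 := hmax.deriv_eq_zero
  -- second derivative is nonpositive at the local max
  have hw : deriv (deriv v) c ≤ 0 := by
    by_contra hpos
    push_neg at hpos
    have hcont : ContinuousAt (deriv (deriv v)) c :=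
      (hwcont c hc).continuousAt (isOpen_Ioo.mem_nhds hc)
    have h1 : ∀ᶠ x in nhds c, 0 < deriv (deriv v) x := hcont (Ioi_mem_nhds hpos)
    have h2 : ∀ᶠ x in nhds c, x ∈ Set.Ioo (0 : ℝ) 1 :=
      isOpen_Ioo.mem_nhds hc
    obtain ⟨ε, hε, hball⟩ := Metric.eventually_nhds_iff.mp ((h1.and h2).and hmax)
    set d := ε / 2 with hd
    have hdpos : 0 < d := by positivity
    have hmem : ∀ x ∈ Set.Icc c (c + d), dist x c < ε := by
      intro x hx
      rw [Real.dist_eq, abs_of_nonneg (by linarith [hx.1])]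
      have := hx.2; simp only [hd] at *; linarith
    have hsub : Set.Icc c (c + d) ⊆ Set.Ioo (0 : ℝ) 1 := fun x hx =>
      ((hball (hmem x hx)).1).2
    -- deriv v is strictly monotone on [c, c+d]
    have hmono : StrictMonoOn (deriv v) (Set.Icc c (c + d)) := by
      apply strictMonoOn_of_deriv_pos (convex_Icc _ _) (hgcont.mono hsub)
      intro x hx
      rw [interior_Icc] at hx
      have hx' : x ∈ Set.Icc c (c + d) := ⟨le_of_lt hx.1, le_of_lt hx.2⟩
      exact ((hball (hmem x hx')).1).1
    have hgpos : ∀ x ∈ Set.Ioo c (c + d), 0 < deriv v x := by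
      intro x hx
      have := hmono (Set.left_mem_Icc.mpr (by linarith)) ⟨le_of_lt hx.1, le_of_lt hx.2⟩ hx.1
      rw [hg0] at this; exact this
    have hvmono : StrictMonoOn v (Set.Icc c (c + d)) := by
      apply strictMonoOn_of_deriv_pos (convex_Icc _ _) ((hv2.continuousOn).mono hsub)
      intro x hx
      rw [interior_Icc] at hx
      exact hgpos x hx
    have hlt : v c < v (c + d) :=
      hvmono (Set.left_mem_Icc.mpr (by linarith)) (Set.right_mem_Icc.mpr (by linarith))
        (by linarith)
    have hle : v (c + d) ≤ v c :=
      (hball (hmem (c + d) (Set.right_mem_Icc.mpr (by linarith)))).2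
    linarith
  -- plug into the equation at c
  have hderiv : deriv (fun s : ℝ => s * deriv v s) c
      = deriv v c + c * deriv (deriv v) c := by
    rw [deriv_fun_mul differentiableAt_fun_id hgdiff, deriv_id'']
    ring
  have hEq := heq c hc
  rw [hderiv, hg0] at hEq
  have hfc : f c < 0 := hfneg c hc
  have hc0 : 0 < c := hc.1
  have hcoef : 0 < 1 / c ^ 2 + a ^ 2 := by positivity
  nlinarith [mul_nonneg (le_of_lt hc0) (neg_nonneg.mpr hw),
    mul_nonneg (mul_nonneg (le_of_lt hc0) (le_of_lt hcoef)) hvc,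
    mul_neg_of_pos_of_neg hc0 hfc]

/-- One-dimensional maximum principle: if `a > 0`, `f` is continuous on `[0,1]` and
negative on `(0,1)`, and `v ∈ C²((0,1)) ∩ C([0,1])` satisfies
`−(r v')' + r(1/r² + a²) v = r f` on `(0,1)` with `v(0) = v(1) = 0`,
then `v < 0` on `(0,1)`. -/
theorem stmt17 (a : ℝ) (ha : 0 < a) (f v : ℝ → ℝ)
    (hf : ContinuousOn f (Set.Icc 0 1)) (hfneg : ∀ r ∈ Set.Ioo (0 : ℝ) 1, f r < 0)
    (hv : ContinuousOn v (Set.Icc 0 1)) (hv2 : ContDiffOn ℝ 2 v (Set.Ioo 0 1))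
    (heq : ∀ r ∈ Set.Ioo (0 : ℝ) 1,
      -(deriv (fun s : ℝ => s * deriv v s) r) + r * (1 / r ^ 2 + a ^ 2) * v r = r * f r)
    (h0 : v 0 = 0) (h1 : v 1 = 0) :
    ∀ r ∈ Set.Ioo (0 : ℝ) 1, v r < 0 := by
  have key := no_nonneg_max a ha f v hfneg hv2 heq
  -- Step 1: v ≤ 0 on [0,1]
  have hle : ∀ x ∈ Set.Icc (0 : ℝ) 1, v x ≤ 0 := by
    obtain ⟨c, hcmem, hcmax⟩ := isCompact_Icc.exists_isMaxOn
      (Set.nonempty_Icc.mpr (by norm_num)) hv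
    intro x hx
    by_contra hxpos
    push_neg at hxpos
    have hvc : 0 < v c := lt_of_lt_of_le hxpos (hcmax hx)
    have hc0 : c ≠ 0 := fun h => by rw [h, h0] at hvc; exact lt_irrefl 0 hvc
    have hc1 : c ≠ 1 := fun h => by rw [h, h1] at hvc; exact lt_irrefl 0 hvc
    have hcIoo : c ∈ Set.Ioo (0 : ℝ) 1 :=
      ⟨lt_of_le_of_ne hcmem.1 (Ne.symm hc0), lt_of_le_of_ne hcmem.2 hc1⟩
    have hloc : IsLocalMax v c :=
      hcmax.filter_mono (le_principal_iff.mpr (Icc_mem_nhds hcIoo.1 hcIoo.2))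
    exact key c hcIoo hloc (le_of_lt hvc)
  -- Step 2: strict negativity
  intro r hr
  rcases lt_or_eq_of_le (hle r (Set.mem_Icc_of_Ioo hr)) with h | h
  · exact h
  · exfalso
    have hloc : IsLocalMax v r := by
      have hmax : IsMaxOn v (Set.Icc 0 1) r := fun x hx => by
        simp only [Set.mem_setOf_eq]; rw [h]; exact hle x hx
      exact hmax.filter_mono (le_principal_iff.mpr (Icc_mem_nhds hr.1 hr.2))
    exact key r hr hloc (le_of_eq h.symm)
end
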